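/- arXiv:2204.13674 — 5 statements merged into one kernel-verified Lean document; each statement's English description precedes it below -/
import Mathlib

section
/- Let F be a field, (V, ω) a symplectic vector space over F of dimension 2d, and let Φ₁, Φ₂ be complementary Lagrangian subspaces with bases e₁,…,e_d of Φ₁ and dual basis f₁,…,f_d of Φ₂ (so ω(e_α, f_β) = δ_{αβ}). Let Φ₃ be the graph of the map ψ₃ : Φ₁ → Φ₂ with ψ₃(e_α) = f_α, and Φ₄ the graph of ψ₄ with ψ₄(e_α) = λ_α f_α for pairwise distinct nonzero scalars λ_α ∈ F. Then there is no nonzero isotropic subspace W ≤ V satisfying dim(Φⱼ ∩ W) ≥ (1/2)·dim(W) for all j ∈ {1,2,3,4}. -/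
/-- Let `(V, ω)` be a symplectic vector space of dimension `2d` over a field `F`, with
complementary Lagrangian subspaces `Φ₁ = span(e)`, `Φ₂ = span(f)` spanned by dual bases
(`ω(e_α, f_β) = δ_{αβ}`).  Let `Φ₃` be the graph of `ψ₃ : e_α ↦ f_α` and `Φ₄` the graph
of `ψ₄ : e_α ↦ λ_α f_α` for pairwise distinct nonzero scalars `λ_α`.  Then there is no
nonzero isotropic subspace `W ≤ V` with `dim(Φⱼ ∩ W) ≥ (1/2)·dim W` for `j = 1,2,3,4`. -/
theorem stmt0 {F V : Type*} [Field F] [AddCommGroup V] [Module F V]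
    [FiniteDimensional F V]
    (ω : LinearMap.BilinForm F V) (halt : ω.IsAlt) (hnd : ω.Nondegenerate)
    (d : ℕ) (hdim : Module.finrank F V = 2 * d)
    (e f : Fin d → V)
    (hef : ∀ α β, ω (e α) (f β) = if α = β then 1 else 0)
    (hee : ∀ α β, ω (e α) (e β) = 0) (hff : ∀ α β, ω (f α) (f β) = 0)
    (hsup : Submodule.span F (Set.range e) ⊔ Submodule.span F (Set.range f) = ⊤)
    (hdisj : Submodule.span F (Set.range e) ⊓ Submodule.span F (Set.range f) = ⊥)
    (lam : Fin d → F) (hlam0 : ∀ α, lam α ≠ 0) (hlaminj : Function.Injective lam) :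
    ¬ ∃ W : Submodule F V, W ≠ ⊥ ∧ (∀ x ∈ W, ∀ y ∈ W, ω x y = 0) ∧
      Module.finrank F W ≤
        2 * Module.finrank F ↥(Submodule.span F (Set.range e) ⊓ W) ∧
      Module.finrank F W ≤
        2 * Module.finrank F ↥(Submodule.span F (Set.range f) ⊓ W) ∧
      Module.finrank F W ≤
        2 * Module.finrank F ↥(Submodule.span F (Set.range fun α => e α + f α) ⊓ W) ∧
      Module.finrank F W ≤
        2 * Module.finrank F ↥(Submodule.span F (Set.range fun α => e α + lam α • f α) ⊓ W) := by
  classical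
  rintro ⟨W, hWbot, hiso, h1, h2, h3, h4⟩
  set Φ₁ := Submodule.span F (Set.range e) with hΦ₁def
  set Φ₂ := Submodule.span F (Set.range f) with hΦ₂def
  set Φ₃ := Submodule.span F (Set.range fun α => e α + f α) with hΦ₃def
  set Φ₄ := Submodule.span F (Set.range fun α => e α + lam α • f α) with hΦ₄def
  have he1 : ∀ α, e α ∈ Φ₁ := fun α => by
    rw [hΦ₁def]; exact Submodule.subset_span ⟨α, rfl⟩
  have hf2 : ∀ α, f α ∈ Φ₂ := fun α => by
    rw [hΦ₂def]; exact Submodule.subset_span ⟨α, rfl⟩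
  -- coefficients of e,f combos vanish
  have hpair : ∀ (a b : Fin d → F), (∑ α, a α • e α) + (∑ α, b α • f α) = 0 →
      ∀ β, a β = 0 ∧ b β = 0 := by
    intro a b hab β
    constructor
    · have h := congrArg (fun x => ω x (f β)) hab
      simp only [map_add, map_sum, map_smul, LinearMap.add_apply, LinearMap.sum_apply,
        LinearMap.smul_apply, smul_eq_mul, hef, hff, map_zero, LinearMap.zero_apply,
        mul_ite, mul_one, mul_zero] at h
      simpa [Finset.sum_ite_eq'] using h
    · have h := congrArg (fun x => ω (e β) x) hab
      simp only [map_add, map_sum, map_smul, smul_eq_mul, hef, hee,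
        mul_ite, mul_one, mul_zero] at h
      simpa [Finset.sum_ite_eq] using h
  have hindep : LinearIndependent F (Sum.elim e f) := by
    rw [Fintype.linearIndependent_iff]
    intro g hg i
    rw [Fintype.sum_sum_type] at hg
    simp only [Sum.elim_inl, Sum.elim_inr] at hg
    have h := hpair (fun α => g (Sum.inl α)) (fun α => g (Sum.inr α)) hg
    cases i with
    | inl α => exact (h α).1
    | inr α => exact (h α).2
  have hsp : ⊤ ≤ Submodule.span F (Set.range (Sum.elim e f)) := by
    rw [Set.Sum.elim_range, Submodule.span_union, ← hΦ₁def, ← hΦ₂def, hsup]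
  set B : Module.Basis (Fin d ⊕ Fin d) F V := Module.Basis.mk hindep hsp with hBdef
  have hBe : ∀ α, B (Sum.inl α) = e α := fun α => Module.Basis.mk_apply _ _ _
  have hBf : ∀ α, B (Sum.inr α) = f α := fun α => Module.Basis.mk_apply _ _ _
  set P : V →ₗ[F] V := B.constr F (Sum.elim e (fun _ => (0:V))) with hPdef
  set J : V →ₗ[F] V := B.constr F (Sum.elim f (fun _ => (0:V))) with hJdef
  set J' : V →ₗ[F] V := B.constr F (Sum.elim (fun α => lam α • f α) (fun _ => (0:V))) with hJ'def
  set Q : V →ₗ[F] V := B.constr F (Sum.elim (fun _ => (0:V)) e) with hQdef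
  set D : V →ₗ[F] V := B.constr F (Sum.elim (fun α => lam α • e α) (fun _ => (0:V))) with hDdef
  have hPe : ∀ α, P (e α) = e α := fun α => by
    rw [hPdef, ← hBe α, Module.Basis.constr_basis, hBe α]; simp
  have hPf : ∀ α, P (f α) = 0 := fun α => by
    rw [hPdef, ← hBf α, Module.Basis.constr_basis]; rfl
  have hJe : ∀ α, J (e α) = f α := fun α => by
    rw [hJdef, ← hBe α, Module.Basis.constr_basis]; rfl
  have hJf : ∀ α, J (f α) = 0 := fun α => by
    rw [hJdef, ← hBf α, Module.Basis.constr_basis]; rfl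
  have hJ'e : ∀ α, J' (e α) = lam α • f α := fun α => by
    rw [hJ'def, ← hBe α, Module.Basis.constr_basis]; rfl
  have hQf : ∀ α, Q (f α) = e α := fun α => by
    rw [hQdef, ← hBf α, Module.Basis.constr_basis]; rfl
  have hDe : ∀ α, D (e α) = lam α • e α := fun α => by
    rw [hDdef, ← hBe α, Module.Basis.constr_basis, hBe α]; simp
  -- helpers for span arguments
  have key_eq : ∀ (T₁ T₂ : V →ₗ[F] V) (s : Set V), (∀ y ∈ s, T₁ y = T₂ y) →
      ∀ x ∈ Submodule.span F s, T₁ x = T₂ x := fun T₁ T₂ s h x hx =>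
    LinearMap.eqOn_span h hx
  have hmem_span : ∀ (T : V →ₗ[F] V) (s : Set V) (p : Submodule F V),
      (∀ y ∈ s, T y ∈ p) → ∀ x ∈ Submodule.span F s, T x ∈ p := by
    intro T s p h x hx
    have hle : Submodule.span F s ≤ Submodule.comap T p :=
      Submodule.span_le.2 (fun y hy => h y hy)
    exact hle hx
  have hQJ : ∀ x ∈ Φ₁, Q (J x) = x := by
    intro x hx
    rw [hΦ₁def] at hx
    have h := key_eq (Q ∘ₗ J) LinearMap.id (Set.range e) ?_ x hx
    · simpa using h
    · rintro _ ⟨α, rfl⟩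
      simp [hJe, hQf]
  have hJDJ' : ∀ x ∈ Φ₁, J (D x) = J' x := by
    intro x hx
    rw [hΦ₁def] at hx
    have h := key_eq (J ∘ₗ D) J' (Set.range e) ?_ x hx
    · simpa using h
    · rintro _ ⟨α, rfl⟩
      simp [hDe, hJe, hJ'e, map_smul]
  have hJ2 : ∀ x ∈ Φ₁, J x ∈ Φ₂ := by
    intro x hx
    rw [hΦ₁def] at hx
    refine hmem_span J (Set.range e) Φ₂ ?_ x hx
    rintro _ ⟨α, rfl⟩
    rw [hJe]; exact hf2 α
  have hJ'2 : ∀ x ∈ Φ₁, J' x ∈ Φ₂ := by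
    intro x hx
    rw [hΦ₁def] at hx
    refine hmem_span J' (Set.range e) Φ₂ ?_ x hx
    rintro _ ⟨α, rfl⟩
    rw [hJ'e]; exact Submodule.smul_mem _ _ (hf2 α)
  have hD1 : ∀ x ∈ Φ₁, D x ∈ Φ₁ := by
    intro x hx
    rw [hΦ₁def] at hx
    refine hmem_span D (Set.range e) Φ₁ ?_ x hx
    rintro _ ⟨α, rfl⟩
    rw [hDe]; exact Submodule.smul_mem _ _ (he1 α)
  have hPrange : ∀ x : V, P x ∈ Φ₁ := by
    intro x
    refine hmem_span P (Set.range (Sum.elim e f)) Φ₁ ?_ x (hsp trivial)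
    rintro _ ⟨i, rfl⟩
    cases i with
    | inl α => rw [Sum.elim_inl, hPe]; exact he1 α
    | inr α => rw [Sum.elim_inr, hPf]; exact Submodule.zero_mem _
  -- dimension bookkeeping
  have hW12bot : (Φ₁ ⊓ W) ⊓ (Φ₂ ⊓ W) = ⊥ :=
    le_antisymm (le_trans (inf_le_inf inf_le_left inf_le_left) hdisj.le) bot_le
  have hsum : Module.finrank F ↥((Φ₁ ⊓ W) ⊔ (Φ₂ ⊓ W)) =
      Module.finrank F ↥(Φ₁ ⊓ W) + Module.finrank F ↥(Φ₂ ⊓ W) := by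
    have h := Submodule.finrank_sup_add_finrank_inf_eq (Φ₁ ⊓ W) (Φ₂ ⊓ W)
    rw [hW12bot] at h
    simpa using h
  have hsup_le : (Φ₁ ⊓ W) ⊔ (Φ₂ ⊓ W) ≤ W := sup_le inf_le_right inf_le_right
  have hle_w : Module.finrank F ↥(Φ₁ ⊓ W) + Module.finrank F ↥(Φ₂ ⊓ W) ≤
      Module.finrank F ↥W := by
    rw [← hsum]; exact Submodule.finrank_mono hsup_le
  have hk12 : Module.finrank F ↥(Φ₁ ⊓ W) = Module.finrank F ↥(Φ₂ ⊓ W) ∧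
      Module.finrank F ↥W = 2 * Module.finrank F ↥(Φ₁ ⊓ W) := by omega
  have hWeq : (Φ₁ ⊓ W) ⊔ (Φ₂ ⊓ W) = W :=
    Submodule.eq_of_le_of_finrank_le hsup_le (by rw [hsum]; omega)
  have hdecomp : ∀ x ∈ Φ₁, ∀ y ∈ Φ₂, x + y ∈ W → x ∈ W ∧ y ∈ W := by
    intro x hx y hy hxy
    rw [← hWeq] at hxy
    obtain ⟨x', hx', y', hy', hsum'⟩ := Submodule.mem_sup.1 hxy
    have hx'1 : x' ∈ Φ₁ := hx'.1
    have hy'2 : y' ∈ Φ₂ := hy'.1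
    have h0 : x - x' = y' - y := by
      rw [sub_eq_sub_iff_add_eq_add, ← hsum']; abel
    have hmemb : x - x' ∈ Φ₁ ⊓ Φ₂ :=
      ⟨Submodule.sub_mem _ hx hx'1, by rw [h0]; exact Submodule.sub_mem _ hy'2 hy⟩
    rw [hdisj] at hmemb
    have hxx : x = x' := by
      have := (Submodule.mem_bot F).1 hmemb
      exact sub_eq_zero.1 this
    have hyy : y = y' := by
      have := (Submodule.mem_bot F).1 hmemb
      rw [h0] at this
      exact (sub_eq_zero.1 this).symm
    exact ⟨hxx ▸ hx'.2, hyy ▸ hy'.2⟩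
  -- the graph step
  have graph_step : ∀ (Ψ : V →ₗ[F] V) (Φ : Submodule F V),
      (∀ u ∈ Φ, Ψ (P u) = u - P u) → (∀ x ∈ Φ₁, Ψ x ∈ Φ₂) →
      Module.finrank F ↥W ≤ 2 * Module.finrank F ↥(Φ ⊓ W) →
      ∀ x ∈ Φ₁ ⊓ W, Ψ x ∈ W := by
    intro Ψ Φ hΨP hΨΦ hdimΦ
    have hmaple : Submodule.map P (Φ ⊓ W) ≤ Φ₁ ⊓ W := by
      rintro _ ⟨u, hu, rfl⟩
      have huΦ : u ∈ Φ := hu.1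
      have huW : u ∈ W := hu.2
      have hPu1 : P u ∈ Φ₁ := hPrange u
      have hrest : u - P u ∈ Φ₂ := by
        rw [← hΨP u huΦ]; exact hΨΦ _ hPu1
      have hdec := hdecomp (P u) hPu1 (u - P u) hrest (by simpa using huW)
      exact ⟨hPu1, hdec.1⟩
    have hinj : Function.Injective ⇑(P.domRestrict (Φ ⊓ W)) := by
      rintro ⟨u, hu⟩ ⟨v, hv⟩ huv
      simp only [LinearMap.domRestrict_apply] at huv
      have hu2 : u = P u + Ψ (P u) := by rw [hΨP u hu.1]; abel
      have hv2 : v = P v + Ψ (P v) := by rw [hΨP v hv.1]; abel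
      have huveq : u = v := by rw [hu2, hv2, huv]
      exact Subtype.ext huveq
    have hfr : Module.finrank F ↥(Submodule.map P (Φ ⊓ W)) =
        Module.finrank F ↥(Φ ⊓ W) := by
      rw [← LinearMap.range_domRestrict]
      exact LinearMap.finrank_range_of_inj hinj
    have hmapeq : Submodule.map P (Φ ⊓ W) = Φ₁ ⊓ W :=
      Submodule.eq_of_le_of_finrank_le hmaple (by omega)
    intro x hx
    rw [← hmapeq] at hx
    obtain ⟨u, hu, hPu⟩ := hx
    have hxW : x ∈ W := hPu ▸ (hmaple ⟨u, hu, rfl⟩).2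
    have hΨx : Ψ x = u - x := by rw [← hPu]; exact hΨP u hu.1
    rw [hΨx]
    exact Submodule.sub_mem _ hu.2 hxW
  -- instantiate for Φ₃ and Φ₄
  have hΨP3 : ∀ u ∈ Φ₃, J (P u) = u - P u := by
    intro u hu
    rw [hΦ₃def] at hu
    have h := key_eq (J ∘ₗ P) (LinearMap.id - P) (Set.range fun α => e α + f α) ?_ u hu
    · simpa using h
    · rintro _ ⟨α, rfl⟩
      simp [map_add, hPe, hPf, hJe]
  have hΨP4 : ∀ u ∈ Φ₄, J' (P u) = u - P u := by
    intro u hu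
    rw [hΦ₄def] at hu
    have h := key_eq (J' ∘ₗ P) (LinearMap.id - P) (Set.range fun α => e α + lam α • f α) ?_ u hu
    · simpa using h
    · rintro _ ⟨α, rfl⟩
      simp [map_add, map_smul, hPe, hPf, hJ'e]
  have hJW : ∀ x ∈ Φ₁ ⊓ W, J x ∈ W := graph_step J Φ₃ hΨP3 hJ2 h3
  have hJ'W : ∀ x ∈ Φ₁ ⊓ W, J' x ∈ W := graph_step J' Φ₄ hΨP4 hJ'2 h4
  -- J maps Φ₁ ⊓ W onto Φ₂ ⊓ W
  have hJmaple : Submodule.map J (Φ₁ ⊓ W) ≤ Φ₂ ⊓ W := by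
    rintro _ ⟨x, hx, rfl⟩
    exact ⟨hJ2 x hx.1, hJW x hx⟩
  have hJinj : Function.Injective ⇑(J.domRestrict (Φ₁ ⊓ W)) := by
    rintro ⟨u, hu⟩ ⟨v, hv⟩ huv
    simp only [LinearMap.domRestrict_apply] at huv
    have huveq : u = v := by rw [← hQJ u hu.1, ← hQJ v hv.1, huv]
    exact Subtype.ext huveq
  have hJfr : Module.finrank F ↥(Submodule.map J (Φ₁ ⊓ W)) =
      Module.finrank F ↥(Φ₁ ⊓ W) := by
    rw [← LinearMap.range_domRestrict]
    exact LinearMap.finrank_range_of_inj hJinj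
  have hJmap : Submodule.map J (Φ₁ ⊓ W) = Φ₂ ⊓ W :=
    Submodule.eq_of_le_of_finrank_le hJmaple (by omega)
  -- invariance of Φ₁ ⊓ W under D
  have hDW : ∀ x ∈ Φ₁ ⊓ W, D x ∈ Φ₁ ⊓ W := by
    rintro x ⟨hx1, hxW⟩
    have hDx1 : D x ∈ Φ₁ := hD1 x hx1
    have hJ'x : J' x ∈ Φ₂ ⊓ W := ⟨hJ'2 x hx1, hJ'W x ⟨hx1, hxW⟩⟩
    rw [← hJmap] at hJ'x
    obtain ⟨z, hz, hJz⟩ := hJ'x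
    have heq : J (D x) = J z := by rw [hJz]; exact hJDJ' x hx1
    have hDz : D x = z := by
      rw [← hQJ (D x) hDx1, ← hQJ z hz.1, heq]
    exact ⟨hDx1, hDz ▸ hz.2⟩
  -- coefficient computations
  have hE1 : ∀ a : Fin d → F, (∑ α, a α • e α) ∈ Φ₁ := fun a =>
    Submodule.sum_mem _ (fun α _ => Submodule.smul_mem _ _ (he1 α))
  have hDcoef : ∀ a : Fin d → F, D (∑ α, a α • e α) = ∑ α, (lam α * a α) • e α := by
    intro a
    rw [map_sum]
    refine Finset.sum_congr rfl fun α _ => ?_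
    rw [map_smul, hDe, smul_smul, mul_comm]
  -- induction on support
  have key : ∀ n : ℕ, ∀ a : Fin d → F,
      (Finset.univ.filter fun γ => a γ ≠ 0).card ≤ n → a ≠ 0 →
      (∑ α, a α • e α) ∈ W → ∃ α, e α ∈ W := by
    intro n
    induction n with
    | zero =>
      intro a hcard ha _
      exfalso
      apply ha
      funext γ
      show a γ = 0
      by_contra hγ
      have : γ ∈ Finset.univ.filter fun γ => a γ ≠ 0 := by simp [hγ]
      have := Finset.card_pos.2 ⟨γ, this⟩
      omega
    | succ n ih =>
      intro a hcard ha hmem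
      obtain ⟨α, hα⟩ : ∃ α, a α ≠ 0 := by
        by_contra h
        push_neg at h
        exact ha (funext h)
      by_cases hall : ∀ β, β ≠ α → a β = 0
      · have hx : (∑ γ, a γ • e γ) = a α • e α := by
          rw [Finset.sum_eq_single α (fun β _ hβ => by rw [hall β hβ, zero_smul])
            (fun h => absurd (Finset.mem_univ α) h)]
        refine ⟨α, ?_⟩
        have hmem' := Submodule.smul_mem W (a α)⁻¹ (hx ▸ hmem)
        rwa [inv_smul_smul₀ hα] at hmem'
      · push_neg at hall
        obtain ⟨β, hβα, hβ⟩ := hall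
        set b : Fin d → F := fun γ => (lam γ - lam β) * a γ with hb
        have hbmem : (∑ γ, b γ • e γ) ∈ W := by
          have hD := (hDW _ ⟨hE1 a, hmem⟩).2
          rw [hDcoef] at hD
          have heq : (∑ γ, b γ • e γ) =
              (∑ γ, (lam γ * a γ) • e γ) - lam β • (∑ γ, a γ • e γ) := by
            rw [Finset.smul_sum, ← Finset.sum_sub_distrib]
            refine Finset.sum_congr rfl fun γ _ => ?_
            show ((lam γ - lam β) * a γ) • e γ =
              (lam γ * a γ) • e γ - lam β • (a γ • e γ)
            rw [sub_mul, sub_smul, smul_smul]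
          rw [heq]
          exact Submodule.sub_mem _ hD (Submodule.smul_mem _ _ hmem)
        have hbα : b α ≠ 0 := by
          apply mul_ne_zero _ hα
          intro h
          exact hβα (hlaminj (sub_eq_zero.1 h)).symm
        have hbne : b ≠ 0 := fun h => hbα (by rw [h]; rfl)
        have hcards : (Finset.univ.filter fun γ => b γ ≠ 0).card ≤ n := by
          have hsub : (Finset.univ.filter fun γ => b γ ≠ 0) ⊆
              (Finset.univ.filter fun γ => a γ ≠ 0).erase β := by
            intro γ hγ
            simp only [Finset.mem_filter, Finset.mem_erase, Finset.mem_univ, true_and] at hγ ⊢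
            constructor
            · intro hgb
              apply hγ
              rw [hgb]
              show (lam β - lam β) * a β = 0
              simp
            · intro h0
              apply hγ
              show (lam γ - lam β) * a γ = 0
              rw [h0, mul_zero]
          have hcle := Finset.card_le_card hsub
          have hβmem : β ∈ Finset.univ.filter fun γ => a γ ≠ 0 := by simp [hβ]
          have hcerase := Finset.card_erase_of_mem hβmem
          omega
        exact ih b hcards hbne hbmem
  -- conclusion
  have hwne : Module.finrank F ↥W ≠ 0 := fun h0 => hWbot (Submodule.finrank_eq_zero.1 h0)
  have hW1ne : Φ₁ ⊓ W ≠ ⊥ := by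
    intro h
    have h0 : Module.finrank F ↥(Φ₁ ⊓ W) = 0 := by
      rw [h, finrank_bot]
    omega
  obtain ⟨x₀, hx₀mem, hx₀ne⟩ := (Submodule.ne_bot_iff _).1 hW1ne
  obtain ⟨hx₀1, hx₀W⟩ := hx₀mem
  obtain ⟨a, ha⟩ := (Submodule.mem_span_range_iff_exists_fun F).1 (by rw [hΦ₁def] at hx₀1; exact hx₀1)
  have hane : a ≠ 0 := by
    rintro rfl
    apply hx₀ne
    rw [← ha]
    simp
  obtain ⟨α, heαW⟩ := key _ a le_rfl hane (ha ▸ hx₀W)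
  have hfαW : f α ∈ W := by
    have h := hJW (e α) ⟨he1 α, heαW⟩
    rwa [hJe] at h
  have hzero := hiso (e α) heαW (f α) hfαW
  rw [hef] at hzero
  simp at hzero
end

section
/- Let E/F be a Galois extension of fields with Galois group Γ (possibly infinite, acting with open stabilizers so that every element of E lies in a finite subextension), equipped with a normalized trace map tr : E → F restricting to the identity on F, such that the trace pairing is nondegenerate on every finite subextension. Let D be an E-vector space with a semilinear Γ-action, and let End_Γ(D) denote the F-algebra of E-linear Γ-equivariant endomorphisms of D. Then the natural map E ⊗_F End_Γ(D) → End_E(D) is injective. -/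
set_option maxHeartbeats 1000000
set_option synthInstance.maxHeartbeats 200000


open scoped TensorProduct

/-- Key lemma: if `ψ : ι → S` is `F`-linearly independent in `S = End_Γ(D)` and
`∑ i ∈ t, lam i • ψ i = 0` in `End_E(D)`, then all `lam i = 0`. -/
theorem stmt3_key {F E : Type*} [Field F] [Field E] [Algebra F E]
    {Γ : Type*} [Group Γ] [MulSemiringAction Γ E]
    {D : Type*} [AddCommGroup D] [Module E D] [Module F D] [IsScalarTower F E D]
    [SMulCommClass E F D] [DistribMulAction Γ D]
    (hsemi : ∀ (σ : Γ) (c : E) (x : D), σ • (c • x) = (σ • c) • (σ • x))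
    (tr : E →ₗ[F] F)
    (htr_comb : ∀ s : Finset E, ∃ (t : Finset Γ) (c : Γ → F),
        ∀ x ∈ s, algebraMap F E (tr x) = ∑ σ ∈ t, algebraMap F E (c σ) * (σ • x))
    (htr_nondeg : ∀ lam : E, (∀ α : E, tr (α * lam) = 0) → lam = 0)
    (S : Submodule F (D →ₗ[E] D))
    (hS : ∀ ψ : D →ₗ[E] D, ψ ∈ S ↔ ∀ (σ : Γ) (x : D), ψ (σ • x) = σ • ψ x)
    {ι : Type*} (ψ : ι → S) (hind : LinearIndependent F ψ)
    (t : Finset ι) (lam : ι → E)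
    (h : ∑ i ∈ t, lam i • (ψ i : D →ₗ[E] D) = 0) :
    ∀ i ∈ t, lam i = 0 := by
  classical
  -- evaluate the hypothesis
  have h0 : ∀ x : D, ∑ i ∈ t, lam i • (ψ i : D →ₗ[E] D) x = 0 := by
    intro x
    have := congrArg (fun f : D →ₗ[E] D => f x) h
    simpa using this
  -- Step 1: conjugated relations
  have h1 : ∀ (α : E) (σ : Γ) (x : D),
      ∑ i ∈ t, (σ • (α * lam i)) • (ψ i : D →ₗ[E] D) x = 0 := by
    intro α σ x
    have ha : ∑ i ∈ t, (α * lam i) • (ψ i : D →ₗ[E] D) (σ⁻¹ • x) = 0 := by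
      calc ∑ i ∈ t, (α * lam i) • (ψ i : D →ₗ[E] D) (σ⁻¹ • x)
          = α • ∑ i ∈ t, lam i • (ψ i : D →ₗ[E] D) (σ⁻¹ • x) := by
            rw [Finset.smul_sum]
            exact Finset.sum_congr rfl fun i _ => mul_smul α (lam i) _
        _ = 0 := by rw [h0 (σ⁻¹ • x), smul_zero]
    have hb := congrArg (fun y : D => σ • y) ha
    simp only [smul_zero] at hb
    rw [Finset.smul_sum] at hb
    rw [← hb]
    refine Finset.sum_congr rfl fun i _ => ?_
    rw [hsemi σ (α * lam i) ((ψ i : D →ₗ[E] D) (σ⁻¹ • x))]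
    congr 1
    have hequiv := (hS (ψ i)).mp (ψ i).2 σ (σ⁻¹ • x)
    rw [← hequiv, smul_inv_smul]
  -- Step 2: take traces
  have h2 : ∀ (α : E), ∑ i ∈ t, tr (α * lam i) • ψ i = (0 : S) := by
    intro α
    obtain ⟨t', c, hc⟩ := htr_comb (t.image fun i => α * lam i)
    have hcoe : ((∑ i ∈ t, tr (α * lam i) • ψ i : S) : D →ₗ[E] D) = 0 := by
      ext x
      have : ((∑ i ∈ t, tr (α * lam i) • ψ i : S) : D →ₗ[E] D) x
          = ∑ i ∈ t, algebraMap F E (tr (α * lam i)) • (ψ i : D →ₗ[E] D) x := by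
        simp only [Submodule.coe_sum, Submodule.coe_smul, LinearMap.sum_apply,
          LinearMap.smul_apply]
        exact Finset.sum_congr rfl fun i _ => by rw [algebraMap_smul]
      rw [this]
      have hrw : ∀ i ∈ t, algebraMap F E (tr (α * lam i)) • (ψ i : D →ₗ[E] D) x
          = ∑ σ ∈ t', algebraMap F E (c σ) • ((σ • (α * lam i)) • (ψ i : D →ₗ[E] D) x) := by
        intro i hi
        rw [hc _ (Finset.mem_image_of_mem _ hi), Finset.sum_smul]
        exact Finset.sum_congr rfl fun σ _ => (mul_smul _ _ _)
      rw [Finset.sum_congr rfl hrw, Finset.sum_comm]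
      simp only [LinearMap.zero_apply]
      refine Finset.sum_eq_zero fun σ _ => ?_
      rw [← Finset.smul_sum, h1 α σ x, smul_zero]
    exact Subtype.ext (by simpa using hcoe)
  -- Step 3: linear independence over F forces traces to vanish
  intro i hi
  apply htr_nondeg
  intro α
  exact linearIndependent_iff'.mp hind t _ (h2 α) i hi

/-- Let `E/F` be a Galois extension with group `Γ` acting semilinearly on an `E`-vector
space `D`, equipped with a normalized trace `tr : E → F` restricting to the identity on
`F`, expressible on finite sets as an `F`-linear combination of Galois conjugates, and
with nondegenerate trace pairing.  If `S = End_Γ(D)` is the `F`-algebra of `E`-linear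
`Γ`-equivariant endomorphisms of `D`, then the natural map
`E ⊗_F End_Γ(D) → End_E(D)`, `λ ⊗ ψ ↦ λ • ψ`, is injective. -/
theorem stmt3 {F E : Type*} [Field F] [Field E] [Algebra F E]
    {Γ : Type*} [Group Γ] [MulSemiringAction Γ E]
    {D : Type*} [AddCommGroup D] [Module E D] [Module F D] [IsScalarTower F E D]
    [SMulCommClass E F D] [DistribMulAction Γ D]
    (hsemi : ∀ (σ : Γ) (c : E) (x : D), σ • (c • x) = (σ • c) • (σ • x))
    (hfix : ∀ (σ : Γ) (c : F), σ • (algebraMap F E c) = algebraMap F E c)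
    (tr : E →ₗ[F] F)
    (htr_id : ∀ c : F, tr (algebraMap F E c) = c)
    (htr_comb : ∀ s : Finset E, ∃ (t : Finset Γ) (c : Γ → F),
        ∀ x ∈ s, algebraMap F E (tr x) = ∑ σ ∈ t, algebraMap F E (c σ) * (σ • x))
    (htr_nondeg : ∀ lam : E, (∀ α : E, tr (α * lam) = 0) → lam = 0)
    (S : Submodule F (D →ₗ[E] D))
    (hS : ∀ ψ : D →ₗ[E] D, ψ ∈ S ↔ ∀ (σ : Γ) (x : D), ψ (σ • x) = σ • ψ x) :
    Function.Injective
      (TensorProduct.lift (LinearMap.mk₂ F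
        (fun (lam : E) (ψ : S) => lam • (ψ : D →ₗ[E] D))
        (fun a b ψ => add_smul a b _)
        (fun c a ψ => by
          ext x
          simp [smul_assoc])
        (fun a ψ₁ ψ₂ => by
          simp [smul_add])
        (fun c a ψ => by
          ext x
          show a • ((c • ψ : S) : D →ₗ[E] D) x = c • (a • (ψ : D →ₗ[E] D)) x
          rw [Submodule.coe_smul]
          simp only [LinearMap.smul_apply]
          exact smul_comm a c _))) := by
  set f := (TensorProduct.lift (LinearMap.mk₂ F
        (fun (lam : E) (ψ : S) => lam • (ψ : D →ₗ[E] D))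
        (fun a b ψ => add_smul a b _)
        (fun c a ψ => by
          ext x
          simp [smul_assoc])
        (fun a ψ₁ ψ₂ => by
          simp [smul_add])
        (fun c a ψ => by
          ext x
          show a • ((c • ψ : S) : D →ₗ[E] D) x = c • (a • (ψ : D →ₗ[E] D)) x
          rw [Submodule.coe_smul]
          simp only [LinearMap.smul_apply]
          exact smul_comm a c _))) with hf
  rw [injective_iff_map_eq_zero]
  intro z hz
  classical
  let b := Module.Basis.ofVectorSpace F S
  let B := b.baseChange E
  -- decompose z along the base-changed basis
  have hz_eq : z = ∑ i ∈ (B.repr z).support, (B.repr z i) ⊗ₜ[F] (b i) := by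
    conv_lhs => rw [← B.linearCombination_repr z]
    rw [Finsupp.linearCombination_apply, Finsupp.sum]
    refine Finset.sum_congr rfl fun i _ => ?_
    rw [Module.Basis.baseChange_apply, TensorProduct.smul_tmul', smul_eq_mul, mul_one]
  have hfz : ∑ i ∈ (B.repr z).support, (B.repr z i) • ((b i : S) : D →ₗ[E] D) = 0 := by
    rw [hz_eq, map_sum] at hz
    simp only [hf, TensorProduct.lift.tmul, LinearMap.mk₂_apply] at hz
    exact hz
  have hall := stmt3_key hsemi tr htr_comb htr_nondeg S hS
    (fun i => (b i : S)) b.linearIndependent (B.repr z).support (fun i => B.repr z i) hfz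
  have hrepr : B.repr z = 0 := by
    ext i
    by_cases hi : i ∈ (B.repr z).support
    · exact hall i hi
    · simpa using Finsupp.notMem_support_iff.mp hi
  exact B.repr.map_eq_zero_iff.mp hrepr
end

section
/- Let K be a field, R = K⟦t₁,…,t_n⟧ the formal power series ring with its continuous universal derivation d : R → Ω := ⊕ᵢ R·dtᵢ, and let ω be an m×m matrix with entries in Ω satisfying the integrability condition dω + ω ∧ ω = 0. Then there exists a unique m×m matrix T with entries in R satisfying dT = −ω·T and T ≡ I_m modulo the maximal ideal (i.e., T(0) = I_m); moreover T is invertible in M_m(R). -/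
/-- The partial derivative `∂ᵢ` on the formal power series ring `K⟦t₁,…,t_n⟧`:
the coefficient of `∂ᵢ f` at the exponent `e` is `(e(i)+1)` times the coefficient of `f`
at `e + δᵢ`.  These are the components of the continuous universal derivation
`d : R → Ω = ⊕ᵢ R·dtᵢ`. -/
noncomputable def mvPderiv {K : Type*} [CommRing K] {n : ℕ} (i : Fin n)
    (f : MvPowerSeries (Fin n) K) : MvPowerSeries (Fin n) K :=
  fun e => ((e i + 1 : ℕ) : K) * MvPowerSeries.coeff (R := K) (e + Finsupp.single i 1) f

namespace Stmt8

open MvPowerSeries Finset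

variable {K : Type*} [CommRing K] {n : ℕ}

lemma coeff_mvPderiv (i : Fin n) (f : MvPowerSeries (Fin n) K) (e : Fin n →₀ ℕ) :
    MvPowerSeries.coeff (R := K) e (mvPderiv i f)
      = ((e i + 1 : ℕ) : K) * MvPowerSeries.coeff (R := K) (e + Finsupp.single i 1) f := rfl

lemma mvPderiv_add (i : Fin n) (f g : MvPowerSeries (Fin n) K) :
    mvPderiv i (f + g) = mvPderiv i f + mvPderiv i g := by
  ext e
  simp [coeff_mvPderiv, map_add, mul_add]

/-- reindexing lemma -/
lemma sum_antidiagonal_shift (e : Fin n →₀ ℕ) (i : Fin n)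
    (h : (Fin n →₀ ℕ) → (Fin n →₀ ℕ) → K) :
    ∑ p ∈ Finset.HasAntidiagonal.antidiagonal (e + Finsupp.single i 1), (((p.1 : Fin n →₀ ℕ) i : ℕ) : K) * h p.1 p.2
      = ∑ q ∈ Finset.HasAntidiagonal.antidiagonal e,
          (((q.1 : Fin n →₀ ℕ) i + 1 : ℕ) : K) * h (q.1 + Finsupp.single i 1) q.2 := by
  classical
  rw [← Finset.sum_filter_of_ne
    (p := fun p : (Fin n →₀ ℕ) × (Fin n →₀ ℕ) => p.1 i ≠ 0)
    (by
      intro x _ hx hx0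
      apply hx
      rw [hx0]
      simp)]
  refine Finset.sum_nbij' (i := fun p => (p.1 - Finsupp.single i 1, p.2))
    (j := fun q => (q.1 + Finsupp.single i 1, q.2)) ?_ ?_ ?_ ?_ ?_
  · rintro ⟨a, b⟩ hab
    simp only [Finset.mem_filter, Finset.HasAntidiagonal.mem_antidiagonal] at hab
    obtain ⟨hab, ha⟩ := hab
    have hle : Finsupp.single i 1 ≤ a := Finsupp.single_le_iff.2 (Nat.one_le_iff_ne_zero.2 ha)
    simp only [Finset.HasAntidiagonal.mem_antidiagonal]
    have : ((a - Finsupp.single i 1) + b) + Finsupp.single i 1 = e + Finsupp.single i 1 := by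
      rw [add_right_comm, tsub_add_cancel_of_le hle, hab]
    exact add_right_cancel this
  · rintro ⟨a, b⟩ hab
    simp only [Finset.HasAntidiagonal.mem_antidiagonal] at hab
    simp only [Finset.mem_filter, Finset.HasAntidiagonal.mem_antidiagonal]
    constructor
    · rw [add_right_comm, hab]
    · simp
  · rintro ⟨a, b⟩ hab
    simp only [Finset.mem_filter, Finset.HasAntidiagonal.mem_antidiagonal] at hab
    have hle : Finsupp.single i 1 ≤ a := Finsupp.single_le_iff.2 (Nat.one_le_iff_ne_zero.2 hab.2)
    simp [tsub_add_cancel_of_le hle]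
  · rintro ⟨a, b⟩ _
    simp
  · rintro ⟨a, b⟩ hab
    simp only [Finset.mem_filter, Finset.HasAntidiagonal.mem_antidiagonal] at hab
    have h1 : 1 ≤ a i := Nat.one_le_iff_ne_zero.2 hab.2
    have hle : Finsupp.single i 1 ≤ a := Finsupp.single_le_iff.2 h1
    have hval : (a - Finsupp.single i 1 : Fin n →₀ ℕ) i + 1 = a i := by
      rw [Finsupp.tsub_apply, Finsupp.single_apply, if_pos rfl]
      omega
    rw [tsub_add_cancel_of_le hle, hval]

lemma sum_antidiagonal_shift₂ (e : Fin n →₀ ℕ) (i : Fin n)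
    (h : (Fin n →₀ ℕ) → (Fin n →₀ ℕ) → K) :
    ∑ p ∈ Finset.HasAntidiagonal.antidiagonal (e + Finsupp.single i 1),
        (((p.2 : Fin n →₀ ℕ) i : ℕ) : K) * h p.1 p.2
      = ∑ q ∈ Finset.HasAntidiagonal.antidiagonal e,
          (((q.2 : Fin n →₀ ℕ) i + 1 : ℕ) : K) * h q.1 (q.2 + Finsupp.single i 1) := by
  rw [Finsupp.sum_antidiagonal_swap (e + Finsupp.single i 1)
      (fun a b => ((b i : ℕ) : K) * h a b),
    Finsupp.sum_antidiagonal_swap e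
      (fun a b => ((b i + 1 : ℕ) : K) * h a (b + Finsupp.single i 1))]
  exact sum_antidiagonal_shift e i (fun a b => h b a)

lemma mvPderiv_mul (i : Fin n) (f g : MvPowerSeries (Fin n) K) :
    mvPderiv i (f * g) = mvPderiv i f * g + f * mvPderiv i g := by
  classical
  ext e
  rw [map_add, coeff_mvPderiv, MvPowerSeries.coeff_mul, MvPowerSeries.coeff_mul,
    MvPowerSeries.coeff_mul, Finset.mul_sum]
  have key : ∀ p ∈ Finset.HasAntidiagonal.antidiagonal (e + Finsupp.single i 1),
      ((e i + 1 : ℕ) : K) * (MvPowerSeries.coeff (R := K) p.1 f * MvPowerSeries.coeff (R := K) p.2 g)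
        = (((p.1 : Fin n →₀ ℕ) i : ℕ) : K)
            * (MvPowerSeries.coeff (R := K) p.1 f * MvPowerSeries.coeff (R := K) p.2 g)
          + (((p.2 : Fin n →₀ ℕ) i : ℕ) : K)
            * (MvPowerSeries.coeff (R := K) p.1 f * MvPowerSeries.coeff (R := K) p.2 g) := by
    rintro ⟨a, b⟩ hab
    simp only [Finset.HasAntidiagonal.mem_antidiagonal] at hab
    have : a i + b i = e i + 1 := by
      have := congrArg (fun x : Fin n →₀ ℕ => x i) hab
      simpa [Finsupp.add_apply] using this
    have hc : ((e i + 1 : ℕ) : K) = ((a i : ℕ) : K) + ((b i : ℕ) : K) := by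
      rw [← Nat.cast_add]
      congr 1
      omega
    rw [hc, add_mul]
  rw [Finset.sum_congr rfl key, Finset.sum_add_distrib,
    sum_antidiagonal_shift e i
      (fun a b => MvPowerSeries.coeff (R := K) a f * MvPowerSeries.coeff (R := K) b g),
    sum_antidiagonal_shift₂ e i
      (fun a b => MvPowerSeries.coeff (R := K) a f * MvPowerSeries.coeff (R := K) b g)]
  congr 1
  · apply Finset.sum_congr rfl
    rintro ⟨a, b⟩ _
    rw [coeff_mvPderiv]
    ring
  · apply Finset.sum_congr rfl
    rintro ⟨a, b⟩ _
    rw [coeff_mvPderiv]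
    ring

lemma mvPderiv_comm (i j : Fin n) (f : MvPowerSeries (Fin n) K) :
    mvPderiv i (mvPderiv j f) = mvPderiv j (mvPderiv i f) := by
  ext e
  rw [coeff_mvPderiv, coeff_mvPderiv, coeff_mvPderiv, coeff_mvPderiv]
  rw [add_right_comm e (Finsupp.single i 1) (Finsupp.single j 1)]
  rw [← mul_assoc, ← mul_assoc]
  congr 1
  rw [← Nat.cast_mul, ← Nat.cast_mul]
  congr 1
  simp only [Finsupp.add_apply, Finsupp.single_apply]
  rcases eq_or_ne i j with rfl | hij
  · ring
  · rw [if_neg hij, if_neg (fun hh => hij hh.symm)]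
    ring

noncomputable def mvPderivHom (i : Fin n) :
    MvPowerSeries (Fin n) K →+ MvPowerSeries (Fin n) K :=
  AddMonoidHom.mk' (mvPderiv i) (mvPderiv_add i)

variable {m : ℕ}

noncomputable def coeffM (e : Fin n →₀ ℕ)
    (A : Matrix (Fin m) (Fin m) (MvPowerSeries (Fin n) K)) : Matrix (Fin m) (Fin m) K :=
  A.map (MvPowerSeries.coeff (R := K) e)

lemma coeffM_apply (e : Fin n →₀ ℕ) (A : Matrix (Fin m) (Fin m) (MvPowerSeries (Fin n) K))
    (a b : Fin m) : coeffM e A a b = MvPowerSeries.coeff (R := K) e (A a b) := rfl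

lemma coeffM_add (e : Fin n →₀ ℕ) (A B : Matrix (Fin m) (Fin m) (MvPowerSeries (Fin n) K)) :
    coeffM e (A + B) = coeffM e A + coeffM e B := by
  ext a b; simp [coeffM_apply, Matrix.add_apply]

lemma coeffM_neg (e : Fin n →₀ ℕ) (A : Matrix (Fin m) (Fin m) (MvPowerSeries (Fin n) K)) :
    coeffM e (-A) = -coeffM e A := by
  ext a b; simp [coeffM_apply, Matrix.neg_apply]

lemma coeffM_sub (e : Fin n →₀ ℕ) (A B : Matrix (Fin m) (Fin m) (MvPowerSeries (Fin n) K)) :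
    coeffM e (A - B) = coeffM e A - coeffM e B := by
  ext a b; simp [coeffM_apply, Matrix.sub_apply]

lemma coeffM_zero (e : Fin n →₀ ℕ) :
    coeffM e (0 : Matrix (Fin m) (Fin m) (MvPowerSeries (Fin n) K)) = 0 := by
  ext a b; simp [coeffM_apply, Matrix.zero_apply]

lemma coeffM_mul (e : Fin n →₀ ℕ) (A B : Matrix (Fin m) (Fin m) (MvPowerSeries (Fin n) K)) :
    coeffM e (A * B)
      = ∑ p ∈ Finset.HasAntidiagonal.antidiagonal e, coeffM p.1 A * coeffM p.2 B := by
  classical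
  ext a b
  rw [coeffM_apply, Matrix.mul_apply, map_sum]
  rw [Matrix.sum_apply]
  simp only [Finset.sum_apply, Matrix.mul_apply, coeffM_apply, MvPowerSeries.coeff_mul,
    Finset.sum_apply']
  rw [Finset.sum_comm]

lemma coeffM_mapD (e : Fin n →₀ ℕ) (i : Fin n)
    (A : Matrix (Fin m) (Fin m) (MvPowerSeries (Fin n) K)) :
    coeffM e (A.map (mvPderiv i))
      = ((e i + 1 : ℕ) : K) • coeffM (e + Finsupp.single i 1) A := by
  ext a b
  simp [coeffM_apply, Matrix.map_apply, coeff_mvPderiv, Matrix.smul_apply, smul_eq_mul]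

lemma mapD_add (i : Fin n) (A B : Matrix (Fin m) (Fin m) (MvPowerSeries (Fin n) K)) :
    (A + B).map (mvPderiv i) = A.map (mvPderiv i) + B.map (mvPderiv i) := by
  ext a b
  simp [Matrix.map_apply, Matrix.add_apply, mvPderiv_add]

lemma mapD_sub (i : Fin n) (A B : Matrix (Fin m) (Fin m) (MvPowerSeries (Fin n) K)) :
    (A - B).map (mvPderiv i) = A.map (mvPderiv i) - B.map (mvPderiv i) := by
  ext a b
  have : mvPderiv i (A a b - B a b) = mvPderiv i (A a b) - mvPderiv i (B a b) := by
    have h2 := mvPderiv_add i (A a b - B a b) (B a b)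
    rw [sub_add_cancel] at h2
    rw [h2]; abel
  simp [Matrix.map_apply, Matrix.sub_apply, this]

lemma mapD_mul (i : Fin n) (A B : Matrix (Fin m) (Fin m) (MvPowerSeries (Fin n) K)) :
    (A * B).map (mvPderiv i)
      = A.map (mvPderiv i) * B + A * B.map (mvPderiv i) := by
  ext a b
  have : mvPderiv i ((A * B) a b) = mvPderivHom i ((A * B) a b) := rfl
  rw [Matrix.map_apply, this, Matrix.mul_apply, map_sum]
  simp only [mvPderivHom, AddMonoidHom.mk'_apply, mvPderiv_mul, Matrix.add_apply,
    Matrix.mul_apply, Matrix.map_apply, Finset.sum_add_distrib]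

lemma mapD_comm (i j : Fin n) (A : Matrix (Fin m) (Fin m) (MvPowerSeries (Fin n) K)) :
    (A.map (mvPderiv j)).map (mvPderiv i) = (A.map (mvPderiv i)).map (mvPderiv j) := by
  ext a b
  simp [Matrix.map_apply, mvPderiv_comm]

def deg (e : Fin n →₀ ℕ) : ℕ := ∑ j, e j

lemma deg_add (a b : Fin n →₀ ℕ) : deg (a + b) = deg a + deg b := by
  simp [deg, Finsupp.add_apply, Finset.sum_add_distrib]

lemma deg_single (i : Fin n) : deg (Finsupp.single i 1) = 1 := by
  simp [deg, Finsupp.single_apply]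

lemma deg_eq_zero {e : Fin n →₀ ℕ} (h : deg e = 0) : e = 0 := by
  ext j
  have := Finset.sum_eq_zero_iff.mp h j (Finset.mem_univ j)
  simpa using this

noncomputable def pick (e : Fin n →₀ ℕ) (h : e ≠ 0) : Fin n :=
  (Finsupp.ne_iff.mp h).choose

lemma pick_spec (e : Fin n →₀ ℕ) (h : e ≠ 0) : e (pick e h) ≠ 0 := by
  have := (Finsupp.ne_iff.mp h).choose_spec
  simpa [pick] using this

lemma pick_le (e : Fin n →₀ ℕ) (h : e ≠ 0) : Finsupp.single (pick e h) 1 ≤ e :=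
  Finsupp.single_le_iff.2 (Nat.one_le_iff_ne_zero.2 (pick_spec e h))

lemma deg_sub_pick (e : Fin n →₀ ℕ) (h : e ≠ 0) :
    deg (e - Finsupp.single (pick e h) 1) + 1 = deg e := by
  have := tsub_add_cancel_of_le (pick_le e h)
  calc deg (e - Finsupp.single (pick e h) 1) + 1
      = deg (e - Finsupp.single (pick e h) 1) + deg (Finsupp.single (pick e h) 1) := by
        rw [deg_single]
    _ = deg ((e - Finsupp.single (pick e h) 1) + Finsupp.single (pick e h) 1) := by
        rw [deg_add]
    _ = deg e := by rw [this]

end Stmt8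

namespace Stmt8

variable {K : Type*} [Field K] [CharZero K] {n m : ℕ}

noncomputable def cc (ω : Fin n → Matrix (Fin m) (Fin m) (MvPowerSeries (Fin n) K)) :
    (Fin n →₀ ℕ) → Matrix (Fin m) (Fin m) K := fun e =>
  if h : e = 0 then 1
  else
    ((e (pick e h) : ℕ) : K)⁻¹ •
      ∑ p ∈ (Finset.HasAntidiagonal.antidiagonal (e - Finsupp.single (pick e h) 1)).attach,
        (-(coeffM p.1.1 (ω (pick e h)))) * cc ω p.1.2
termination_by e => deg e
decreasing_by
  rename_i e
  have hp := Finset.HasAntidiagonal.mem_antidiagonal.mp p.2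
  have h1 : deg (p.1.1 + p.1.2) = deg (e - Finsupp.single (pick e h) 1) := by rw [hp]
  rw [deg_add] at h1
  have h2 := deg_sub_pick e h
  omega

lemma cc_zero (ω : Fin n → Matrix (Fin m) (Fin m) (MvPowerSeries (Fin n) K)) :
    cc ω 0 = 1 := by
  rw [cc]
  simp

lemma cc_spec (ω : Fin n → Matrix (Fin m) (Fin m) (MvPowerSeries (Fin n) K))
    (e : Fin n →₀ ℕ) (h : e ≠ 0) :
    ((e (pick e h) : ℕ) : K) • cc ω e
      = ∑ p ∈ Finset.HasAntidiagonal.antidiagonal (e - Finsupp.single (pick e h) 1),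
          (-(coeffM p.1 (ω (pick e h)))) * cc ω p.2 := by
  rw [cc, dif_neg h, smul_smul, mul_inv_cancel₀ (Nat.cast_ne_zero.mpr (pick_spec e h)), one_smul]
  rw [← Finset.sum_attach (Finset.HasAntidiagonal.antidiagonal (e - Finsupp.single (pick e h) 1))
    (fun p => (-(coeffM p.1 (ω (pick e h)))) * cc ω p.2)]

noncomputable def TT (ω : Fin n → Matrix (Fin m) (Fin m) (MvPowerSeries (Fin n) K)) :
    Matrix (Fin m) (Fin m) (MvPowerSeries (Fin n) K) :=
  Matrix.of fun a b => (fun e => cc ω e a b : MvPowerSeries (Fin n) K)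

lemma coeffM_TT (ω : Fin n → Matrix (Fin m) (Fin m) (MvPowerSeries (Fin n) K))
    (e : Fin n →₀ ℕ) : coeffM e (TT ω) = cc ω e := by
  ext a b
  rw [coeffM_apply, MvPowerSeries.coeff_apply]
  rfl

noncomputable def UU (ω : Fin n → Matrix (Fin m) (Fin m) (MvPowerSeries (Fin n) K))
    (i : Fin n) : Matrix (Fin m) (Fin m) (MvPowerSeries (Fin n) K) :=
  (TT ω).map (mvPderiv i) + ω i * TT ω

lemma UU_pick_vanish (ω : Fin n → Matrix (Fin m) (Fin m) (MvPowerSeries (Fin n) K))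
    (f : Fin n →₀ ℕ) (h : f ≠ 0) :
    coeffM (f - Finsupp.single (pick f h) 1) (UU ω (pick f h)) = 0 := by
  set i := pick f h with hi
  set e := f - Finsupp.single i 1 with he'
  have he : e + Finsupp.single i 1 = f := tsub_add_cancel_of_le (pick_le f h)
  have hcast : ((e i + 1 : ℕ) : K) = ((f i : ℕ) : K) := by
    congr 1
    have h1 : 1 ≤ f i := Nat.one_le_iff_ne_zero.2 (pick_spec f h)
    rw [he', Finsupp.tsub_apply, Finsupp.single_apply, if_pos rfl]
    omega
  rw [UU, coeffM_add, coeffM_mapD, coeffM_TT, he, hcast, coeffM_mul, cc_spec ω f h]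
  rw [← hi]
  rw [show (f - Finsupp.single i 1) = e from rfl]
  rw [Finset.sum_congr rfl (fun p _ => by rw [coeffM_TT ω p.2] : ∀ p ∈ Finset.HasAntidiagonal.antidiagonal e,
      coeffM p.1 (ω i) * coeffM p.2 (TT ω) = coeffM p.1 (ω i) * cc ω p.2)]
  rw [show ∑ p ∈ Finset.HasAntidiagonal.antidiagonal e, (-(coeffM p.1 (ω i))) * cc ω p.2
      = -∑ p ∈ Finset.HasAntidiagonal.antidiagonal e, coeffM p.1 (ω i) * cc ω p.2 by
    rw [← Finset.sum_neg_distrib]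
    exact Finset.sum_congr rfl fun p _ => by rw [neg_mul]]
  abel

lemma identI (ω : Fin n → Matrix (Fin m) (Fin m) (MvPowerSeries (Fin n) K))
    (hflat : ∀ i j : Fin n,
        (ω j).map (mvPderiv i) - (ω i).map (mvPderiv j) + ω i * ω j - ω j * ω i = 0)
    (i i₀ : Fin n) :
    (UU ω i).map (mvPderiv i₀) - (UU ω i₀).map (mvPderiv i)
      = ω i * UU ω i₀ - ω i₀ * UU ω i := by
  have hf := hflat i i₀
  have h2' : (ω i).map (mvPderiv i₀)
      = (ω i₀).map (mvPderiv i) + ω i * ω i₀ - ω i₀ * ω i := by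
    rw [← sub_eq_zero]
    have hrw : (ω i).map (mvPderiv i₀)
        - ((ω i₀).map (mvPderiv i) + ω i * ω i₀ - ω i₀ * ω i)
        = -((ω i₀).map (mvPderiv i) - (ω i).map (mvPderiv i₀) + ω i * ω i₀ - ω i₀ * ω i) := by
      abel
    rw [hrw, hf, neg_zero]
  simp only [UU, mapD_add, mapD_mul]
  rw [mapD_comm i₀ i, h2']
  noncomm_ring

lemma UU_vanish (ω : Fin n → Matrix (Fin m) (Fin m) (MvPowerSeries (Fin n) K))
    (hflat : ∀ i j : Fin n,
        (ω j).map (mvPderiv i) - (ω i).map (mvPderiv j) + ω i * ω j - ω j * ω i = 0) :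
    ∀ k : ℕ, ∀ e : Fin n →₀ ℕ, deg e ≤ k → ∀ i, coeffM e (UU ω i) = 0 := by
  intro k
  induction k using Nat.strong_induction_on with
  | _ k IH =>
  intro e hdeg i
  have hf : e + Finsupp.single i 1 ≠ 0 := by
    intro h0
    have := congrArg (fun x : Fin n →₀ ℕ => x i) h0
    simp [Finsupp.add_apply, Finsupp.single_apply] at this
  set f := e + Finsupp.single i 1 with hfdef
  set i₀ := pick f hf with hi₀
  by_cases hii : i₀ = i
  · have hsub : f - Finsupp.single i₀ 1 = e := by
      rw [hii, hfdef, add_tsub_cancel_right]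
    have hv := UU_pick_vanish ω f hf
    rw [← hi₀, hsub, hii] at hv
    exact hv
  · have hfi₀ : e i₀ ≠ 0 := by
      have hp := pick_spec f hf
      rw [← hi₀, hfdef] at hp
      intro h0
      apply hp
      simp only [Finsupp.add_apply, Finsupp.single_apply, h0, zero_add]
      rw [if_neg (fun hh => hii hh.symm)]
    have hle : Finsupp.single i₀ 1 ≤ e := Finsupp.single_le_iff.2 (Nat.one_le_iff_ne_zero.2 hfi₀)
    set g := e - Finsupp.single i₀ 1 with hg
    have hge : g + Finsupp.single i₀ 1 = e := tsub_add_cancel_of_le hle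
    have hdegg : deg g + 1 = deg e := by
      rw [← hge, deg_add, deg_single]
    have hk : 1 ≤ k := by omega
    have hgf : g + Finsupp.single i 1 = f - Finsupp.single i₀ 1 := by
      have h1 : (g + Finsupp.single i 1) + Finsupp.single i₀ 1 = f := by
        rw [add_right_comm, hge, hfdef]
      have h2 : (f - Finsupp.single i₀ 1) + Finsupp.single i₀ 1 = f :=
        tsub_add_cancel_of_le (hi₀ ▸ pick_le f hf)
      exact add_right_cancel (h1.trans h2.symm)
    have hI := identI ω hflat i i₀
    have hIc := congrArg (coeffM g) hI
    rw [coeffM_sub, coeffM_sub, coeffM_mapD, coeffM_mapD, hge, hgf] at hIc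
    have hv := UU_pick_vanish ω f hf
    rw [← hi₀] at hv
    rw [hv, smul_zero] at hIc
    have hRHS1 : coeffM g (ω i * UU ω i₀) = 0 := by
      rw [coeffM_mul]
      apply Finset.sum_eq_zero
      rintro ⟨a, b⟩ hab
      have hmem : a + b = g := Finset.HasAntidiagonal.mem_antidiagonal.mp hab
      have hdb : deg b ≤ deg g := by
        have := congrArg deg hmem
        rw [deg_add] at this
        omega
      rw [IH (deg g) (by omega) b hdb i₀, mul_zero]
    have hRHS2 : coeffM g (ω i₀ * UU ω i) = 0 := by
      rw [coeffM_mul]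
      apply Finset.sum_eq_zero
      rintro ⟨a, b⟩ hab
      have hmem : a + b = g := Finset.HasAntidiagonal.mem_antidiagonal.mp hab
      have hdb : deg b ≤ deg g := by
        have := congrArg deg hmem
        rw [deg_add] at this
        omega
      rw [IH (deg g) (by omega) b hdb i, mul_zero]
    rw [hRHS1, hRHS2, sub_zero, sub_zero] at hIc
    have hne : ((g i₀ + 1 : ℕ) : K) ≠ 0 := Nat.cast_ne_zero.mpr (Nat.succ_ne_zero _)
    rcases smul_eq_zero.mp hIc with h | h
    · exact absurd h hne
    · exact h

lemma UU_eq_zero (ω : Fin n → Matrix (Fin m) (Fin m) (MvPowerSeries (Fin n) K))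
    (hflat : ∀ i j : Fin n,
        (ω j).map (mvPderiv i) - (ω i).map (mvPderiv j) + ω i * ω j - ω j * ω i = 0)
    (i : Fin n) : UU ω i = 0 := by
  apply Matrix.ext
  intro a b
  apply MvPowerSeries.ext
  intro e
  have h := UU_vanish ω hflat (deg e) e le_rfl i
  have h2 := congrFun (congrFun h a) b
  rw [coeffM_apply] at h2
  rw [h2]
  simp

lemma TT_pde (ω : Fin n → Matrix (Fin m) (Fin m) (MvPowerSeries (Fin n) K))
    (hflat : ∀ i j : Fin n,
        (ω j).map (mvPderiv i) - (ω i).map (mvPderiv j) + ω i * ω j - ω j * ω i = 0)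
    (i : Fin n) : (TT ω).map (mvPderiv i) = -(ω i) * TT ω := by
  have h := UU_eq_zero ω hflat i
  rw [UU] at h
  rw [neg_mul]
  exact eq_neg_of_add_eq_zero_left h

lemma TT_const (ω : Fin n → Matrix (Fin m) (Fin m) (MvPowerSeries (Fin n) K)) :
    (TT ω).map (MvPowerSeries.constantCoeff (σ := Fin n) (R := K)) = 1 := by
  have h := coeffM_TT ω 0
  rw [cc_zero] at h
  ext a b
  rw [Matrix.map_apply, ← MvPowerSeries.coeff_zero_eq_constantCoeff_apply]
  exact congrFun (congrFun h a) b

lemma TT_unique (ω : Fin n → Matrix (Fin m) (Fin m) (MvPowerSeries (Fin n) K))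
    (T' : Matrix (Fin m) (Fin m) (MvPowerSeries (Fin n) K))
    (hpde : ∀ i, T'.map (mvPderiv i) = -(ω i) * T')
    (hconst : T'.map (MvPowerSeries.constantCoeff (σ := Fin n) (R := K)) = 1) :
    T' = TT ω := by
  have main : ∀ k : ℕ, ∀ e : Fin n →₀ ℕ, deg e ≤ k → coeffM e T' = cc ω e := by
    intro k
    induction k using Nat.strong_induction_on with
    | _ k IH =>
    intro e hdeg
    by_cases h : e = 0
    · subst h
      rw [cc_zero]
      ext a b
      rw [coeffM_apply, MvPowerSeries.coeff_zero_eq_constantCoeff_apply]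
      have := congrFun (congrFun hconst a) b
      rw [Matrix.map_apply] at this
      exact this
    · set i := pick e h with hi
      set e' := e - Finsupp.single i 1 with he'
      have he : e' + Finsupp.single i 1 = e := tsub_add_cancel_of_le (pick_le e h)
      have hdege : deg e' + 1 = deg e := by
        rw [← he, deg_add, deg_single]
      have hcast : ((e' i + 1 : ℕ) : K) = ((e i : ℕ) : K) := by
        congr 1
        have h1 : 1 ≤ e i := Nat.one_le_iff_ne_zero.2 (pick_spec e h)
        rw [he', Finsupp.tsub_apply, Finsupp.single_apply, if_pos rfl]
        omega
      have hp := congrArg (coeffM e') (hpde i)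
      rw [coeffM_mapD, he, hcast, coeffM_mul] at hp
      have hsum : ∑ p ∈ Finset.HasAntidiagonal.antidiagonal e', coeffM p.1 (-(ω i)) * coeffM p.2 T'
          = ∑ p ∈ Finset.HasAntidiagonal.antidiagonal e', (-(coeffM p.1 (ω i))) * cc ω p.2 := by
        apply Finset.sum_congr rfl
        rintro ⟨a, b⟩ hab
        have hmem : a + b = e' := Finset.HasAntidiagonal.mem_antidiagonal.mp hab
        have hdb : deg b ≤ deg e' := by
          have := congrArg deg hmem
          rw [deg_add] at this
          omega
        rw [coeffM_neg, IH (deg e') (by omega) b hdb]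
      rw [hsum, ← cc_spec ω e h, ← hi] at hp
      exact smul_right_injective _ (Nat.cast_ne_zero.mpr (pick_spec e h)) hp
  apply Matrix.ext
  intro a b
  apply MvPowerSeries.ext
  intro e
  have h2 := congrFun (congrFun (main (deg e) e le_rfl) a) b
  rw [coeffM_apply] at h2
  rw [h2]
  rfl

lemma isUnit_of_const (T' : Matrix (Fin m) (Fin m) (MvPowerSeries (Fin n) K))
    (hconst : T'.map (MvPowerSeries.constantCoeff (σ := Fin n) (R := K)) = 1) : IsUnit T' := by
  rw [Matrix.isUnit_iff_isUnit_det]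
  rw [MvPowerSeries.isUnit_iff_constantCoeff]
  have : (MvPowerSeries.constantCoeff (σ := Fin n) (R := K)) T'.det
      = (T'.map (MvPowerSeries.constantCoeff (σ := Fin n) (R := K))).det := by
    rw [← RingHom.mapMatrix_apply, ← RingHom.map_det]
  rw [this, hconst, Matrix.det_one]
  exact isUnit_one

end Stmt8


/-- Let `K` be a field of characteristic zero, `R = K⟦t₁,…,t_n⟧`, and let
`ω = ∑ᵢ ωᵢ dtᵢ` be an `m×m` matrix of `1`-forms over `R` satisfying the integrability
(flatness) condition `dω + ω ∧ ω = 0`, i.e.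
`∂ᵢωⱼ - ∂ⱼωᵢ + ωᵢωⱼ - ωⱼωᵢ = 0` for all `i, j`.  Then there is a unique `m×m` matrix `T`
over `R` with `dT = -ω·T` (i.e. `∂ᵢT = -ωᵢ·T` for all `i`) and `T ≡ 1` modulo the
maximal ideal (constant term the identity matrix); moreover every such `T` is
invertible in `M_m(R)`. -/
theorem stmt8 {K : Type*} [Field K] [CharZero K] (n m : ℕ)
    (ω : Fin n → Matrix (Fin m) (Fin m) (MvPowerSeries (Fin n) K))
    (hflat : ∀ i j : Fin n,
        (ω j).map (mvPderiv i) - (ω i).map (mvPderiv j) + ω i * ω j - ω j * ω i = 0) :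
    (∃! T : Matrix (Fin m) (Fin m) (MvPowerSeries (Fin n) K),
        (∀ i, T.map (mvPderiv i) = -(ω i) * T) ∧
          T.map (MvPowerSeries.constantCoeff (σ := Fin n) (R := K)) = 1) ∧
      ∀ T : Matrix (Fin m) (Fin m) (MvPowerSeries (Fin n) K),
        ((∀ i, T.map (mvPderiv i) = -(ω i) * T) ∧
            T.map (MvPowerSeries.constantCoeff (σ := Fin n) (R := K)) = 1) → IsUnit T := by
  constructor
  · refine ⟨Stmt8.TT ω, ⟨Stmt8.TT_pde ω hflat, Stmt8.TT_const ω⟩, ?_⟩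
    rintro T' ⟨hpde, hconst⟩
    exact Stmt8.TT_unique ω T' hpde hconst
  · rintro T' ⟨_, hconst⟩
    exact Stmt8.isUnit_of_const T' hconst
end

section
/- Let (V, ω) be a symplectic vector space of dimension 2d over an algebraically closed field F, let r ≥ 4, and consider the closed condition on tuples: Z̃ = {(W, Φ₁,…,Φ_r) : W a nonzero isotropic subspace, each Φ_j Lagrangian, dim(Φ_j ∩ W) ≥ dim(W)/2 for all j}. Then the image Z of Z̃ under projection to the r-fold product of Lagrangian Grassmannians is a proper Zariski-closed subset of LGrass(V,ω)^r. -/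
open Module LinearMap Submodule

-- bilinear form vanishing on generators vanishes on spans
theorem span_iso {F V : Type*} [Field F] [AddCommGroup V] [Module F V]
    (ω : LinearMap.BilinForm F V) (s t : Set V)
    (h : ∀ x ∈ s, ∀ y ∈ t, ω x y = 0) :
    ∀ x ∈ span F s, ∀ y ∈ span F t, ω x y = 0 := by
  intro x hx y hy
  have h1 : ∀ x ∈ s, ω x y = 0 := by
    intro x' hx'
    have : span F t ≤ LinearMap.ker (ω x') :=
      Submodule.span_le.mpr fun z hz =>
        show z ∈ LinearMap.ker (ω x') from LinearMap.mem_ker.mpr (h x' hx' z hz)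
    simpa using this hy
  have h2 : span F s ≤ LinearMap.ker (ω.flip y) :=
    Submodule.span_le.mpr (fun z hz => h1 z hz)
  simpa using h2 hx

theorem key {F V : Type*} [Field F] [AddCommGroup V] [Module F V] [FiniteDimensional F V]
    (ω : LinearMap.BilinForm F V) (halt : ω.IsAlt) (d : ℕ)
    (hdim : Module.finrank F V = 2 * d)
    (e f : Fin d → V)
    (hee : ∀ i j, ω (e i) (e j) = 0) (hff : ∀ i j, ω (f i) (f j) = 0)
    (hef : ∀ i j, ω (e i) (f j) = if i = j then 1 else 0)
    (lam : Fin d → F) (hlam0 : ∀ i, lam i ≠ 0) (hlaminj : Function.Injective lam)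
    (W : Submodule F V) (hWne : W ≠ ⊥) (hWiso : ∀ x ∈ W, ∀ y ∈ W, ω x y = 0)
    (hW1 : Module.finrank F W ≤ 2 * Module.finrank F ↥(span F (Set.range e) ⊓ W))
    (hW2 : Module.finrank F W ≤ 2 * Module.finrank F ↥(span F (Set.range f) ⊓ W))
    (hW3 : Module.finrank F W ≤ 2 * Module.finrank F
      ↥(span F (Set.range (fun i => e i + (1:F) • f i)) ⊓ W))
    (hW4 : Module.finrank F W ≤ 2 * Module.finrank F
      ↥(span F (Set.range (fun i => e i + lam i • f i)) ⊓ W)) : False := by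
  classical
  have hfe : ∀ i j, ω (f i) (e j) = if i = j then -1 else 0 := by
    intro i j
    have h := halt.neg_eq (e j) (f i)
    rw [hef] at h
    rw [← h]
    by_cases hij : i = j <;> simp [hij, eq_comm]
  -- basic sum computations
  have hsA : ∀ (μ c : Fin d → F) (j : Fin d),
      ω (∑ i, c i • (e i + μ i • f i)) (f j) = c j := by
    intro μ c j
    simp [map_sum, map_add, map_smul, LinearMap.sum_apply, LinearMap.smul_apply,
      LinearMap.add_apply, hef, hff, smul_eq_mul, mul_ite, mul_one, mul_zero,
      Finset.sum_ite_eq']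
  have hsB : ∀ (c : Fin d → F) (j : Fin d), ω (∑ i, c i • f i) (f j) = 0 := by
    intro c j
    simp [map_sum, map_smul, LinearMap.sum_apply, LinearMap.smul_apply, hff]
  have hsC : ∀ (c : Fin d → F) (j : Fin d), ω (e j) (∑ i, c i • f i) = c j := by
    intro c j
    simp [map_sum, map_smul, hef, smul_eq_mul, mul_ite, mul_one, mul_zero,
      Finset.sum_ite_eq']
  have hsD : ∀ (μ c : Fin d → F) (j : Fin d),
      ω (e j) (∑ i, c i • (e i + μ i • f i)) = μ j * c j := by
    intro μ c j
    simp [map_sum, map_add, map_smul, hee, hef, smul_eq_mul, mul_ite, mul_one,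
      mul_zero, Finset.sum_ite_eq', mul_comm]
  -- linear independence of combined family
  have hli : LinearIndependent F (Sum.elim e f) := by
    rw [Fintype.linearIndependent_iff]
    intro g hg
    rw [Fintype.sum_sum_type] at hg
    have hg' : (∑ i, g (Sum.inl i) • (e i + (0:Fin d → F) i • f i)) +
        ∑ i, g (Sum.inr i) • f i = 0 := by
      simpa using hg
    intro i
    cases i with
    | inl i =>
      have := congrArg (fun v => ω v (f i)) hg'
      simp only [map_add, LinearMap.add_apply, hsA, hsB, add_zero, map_zero,
        LinearMap.zero_apply] at this
      simpa using this
    | inr i =>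
      have := congrArg (⇑(ω (e i))) hg'
      rw [map_add, hsC, hsD, map_zero] at this
      simpa using this
  -- the basis
  have hcard : Fintype.card (Fin d ⊕ Fin d) = Module.finrank F V := by
    simp only [Fintype.card_sum, Fintype.card_fin, hdim]; ring
  have hspan : span F (Set.range (Sum.elim e f)) = ⊤ := by
    apply Submodule.eq_top_of_finrank_eq
    rw [finrank_span_eq_card hli, hcard]
  -- projections
  let P : V →ₗ[F] V := ∑ j, (ω.flip (f j)).smulRight (e j)
  let Q : V →ₗ[F] V := ∑ j, (ω (e j)).smulRight (f j)
  have hP : ∀ v, P v = ∑ j, ω v (f j) • e j := by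
    intro v
    simp [P, LinearMap.sum_apply, LinearMap.smulRight_apply, LinearMap.flip_apply]
  have hQ : ∀ v, Q v = ∑ j, ω (e j) v • f j := by
    intro v
    simp [Q, LinearMap.sum_apply, LinearMap.smulRight_apply]
  have hPQ : ∀ v, P v + Q v = v := by
    have : P + Q = LinearMap.id := by
      apply LinearMap.ext_on hspan
      rintro x ⟨i, rfl⟩
      cases i with
      | inl i =>
        simp only [Sum.elim_inl, LinearMap.add_apply, LinearMap.id_apply, hP, hQ,
          hef, hee]
        simp [ite_smul]
      | inr i =>
        simp only [Sum.elim_inr, LinearMap.add_apply, LinearMap.id_apply, hP, hQ,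
          hff, hef]
        simp [ite_smul]
    intro v
    have := congrArg (fun L => L v) this
    simpa using this
  -- the four Lagrangians (as spans)
  set E : Submodule F V := span F (Set.range e) with hE
  set Fs : Submodule F V := span F (Set.range f) with hFs
  -- isotropy of E and Fs
  have hEiso : ∀ x ∈ E, ∀ y ∈ E, ω x y = 0 := by
    apply span_iso
    rintro x ⟨i, rfl⟩ y ⟨j, rfl⟩
    exact hee i j
  have hFiso : ∀ x ∈ Fs, ∀ y ∈ Fs, ω x y = 0 := by
    apply span_iso
    rintro x ⟨i, rfl⟩ y ⟨j, rfl⟩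
    exact hff i j
  -- P fixes E, kills Fs ; Q kills E, fixes Fs
  have hQE : ∀ v ∈ E, Q v = 0 := by
    intro v hv
    rw [hQ]
    refine Finset.sum_eq_zero fun j _ => ?_
    have : ω (e j) v = 0 := hEiso (e j) (subset_span ⟨j, rfl⟩) v hv
    rw [this, zero_smul]
  have hPF : ∀ v ∈ Fs, P v = 0 := by
    intro v hv
    rw [hP]
    refine Finset.sum_eq_zero fun j _ => ?_
    have : ω v (f j) = 0 := hFiso v hv (f j) (subset_span ⟨j, rfl⟩)
    rw [this, zero_smul]
  have hPE : ∀ v ∈ E, P v = v := by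
    intro v hv
    have := hPQ v
    rw [hQE v hv, add_zero] at this
    exact this
  have hQF : ∀ v ∈ Fs, Q v = v := by
    intro v hv
    have := hPQ v
    rw [hPF v hv, zero_add] at this
    exact this
  -- P lands in E, Q lands in Fs
  have hPmem : ∀ v, P v ∈ E := by
    intro v
    rw [hP]
    exact Submodule.sum_mem _ fun j _ =>
      Submodule.smul_mem _ _ (subset_span ⟨j, rfl⟩)
  have hQmem : ∀ v, Q v ∈ Fs := by
    intro v
    rw [hQ]
    exact Submodule.sum_mem _ fun j _ =>
      Submodule.smul_mem _ _ (subset_span ⟨j, rfl⟩)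
  -- dimensions
  set m := Module.finrank F W with hm
  set A : Submodule F V := E ⊓ W with hA
  set B : Submodule F V := Fs ⊓ W with hB
  have hm_pos : 0 < m := by
    rw [hm]
    haveI : Nontrivial ↥W := Submodule.nontrivial_iff_ne_bot.mpr hWne
    exact Module.finrank_pos
  have hABbot : A ⊓ B = ⊥ := by
    rw [eq_bot_iff]
    rintro v ⟨⟨hvE, _⟩, ⟨hvF, _⟩⟩
    have h1 : P v = v := hPE v hvE
    have h2 : P v = 0 := hPF v hvF
    have : v = 0 := by rw [← h1, h2]
    simpa [this]
  have hab : Module.finrank F A + Module.finrank F B ≤ m := by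
    have hsum := Submodule.finrank_sup_add_finrank_inf_eq A B
    rw [hABbot, finrank_bot, add_zero] at hsum
    rw [← hsum]
    exact Submodule.finrank_mono (sup_le inf_le_right inf_le_right)
  set a := Module.finrank F A with ha_def
  have hWA : m ≤ 2 * a := hW1
  have hWB : m ≤ 2 * Module.finrank F B := hW2
  have hm2a : m = 2 * a := by clear_value a m; omega
  have hBa : Module.finrank F B = a := by clear_value a m; omega
  have hWAB : A ⊔ B = W := by
    apply Submodule.eq_of_le_of_finrank_le (sup_le inf_le_right inf_le_right)
    have hsum := Submodule.finrank_sup_add_finrank_inf_eq A B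
    rw [hABbot, finrank_bot, add_zero] at hsum
    rw [hsum]
    clear_value a m
    omega
  -- P and Q map W into A and B
  have hPW : ∀ w ∈ W, P w ∈ A := by
    intro w hw
    rw [← hWAB] at hw
    obtain ⟨α, hα, β, hβ, rfl⟩ := Submodule.mem_sup.mp hw
    rw [map_add, hPE α hα.1, hPF β hβ.1, add_zero]
    exact hα
  have hQW : ∀ w ∈ W, Q w ∈ B := by
    intro w hw
    rw [← hWAB] at hw
    obtain ⟨α, hα, β, hβ, rfl⟩ := Submodule.mem_sup.mp hw
    rw [map_add, hQE α hα.1, hQF β hβ.1, zero_add]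
    exact hβ
  have hsA0 : ∀ (c : Fin d → F) (j : Fin d), ω (∑ i, c i • e i) (f j) = c j := by
    intro c j
    have := hsA 0 c j
    simpa using this
  -- the key claim
  have CL : ∀ (μ : Fin d → F),
      m ≤ 2 * Module.finrank F ↥(span F (Set.range (fun i => e i + μ i • f i)) ⊓ W) →
      ∀ α ∈ A, (∑ j, (μ j * ω α (f j)) • f j) ∈ B := by
    intro μ hμ α hα
    set C : Submodule F V := span F (Set.range (fun i => e i + μ i • f i)) ⊓ W with hC
    set ρ : ↥C →ₗ[F] V := P ∘ₗ C.subtype with hρ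
    have hker : LinearMap.ker ρ = ⊥ := by
      rw [eq_bot_iff]
      rintro ⟨x, hxC⟩ hx
      have hx' : P x = 0 := hx
      obtain ⟨c, hc⟩ := (mem_span_range_iff_exists_fun F).mp hxC.1
      have hPx : P x = ∑ i, c i • e i := by
        rw [hP]
        refine Finset.sum_congr rfl fun i _ => ?_
        rw [← hc, hsA]
      have hcj : ∀ j, c j = 0 := by
        intro j
        rw [← hsA0 c j, ← hPx, hx', map_zero, LinearMap.zero_apply]
      have hx0 : x = 0 := by
        rw [← hc]
        exact Finset.sum_eq_zero fun i _ => by rw [hcj, zero_smul]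
      simpa using hx0
    have hrange : LinearMap.range ρ = A := by
      apply Submodule.eq_of_le_of_finrank_le
      · rintro _ ⟨x, rfl⟩
        exact hPW x x.2.2
      · have h1 := LinearMap.finrank_range_add_finrank_ker ρ
        rw [hker, finrank_bot, add_zero] at h1
        rw [h1]
        clear_value a m
        omega
    obtain ⟨x, hxA⟩ : ∃ x : ↥C, ρ x = α := by
      have : α ∈ LinearMap.range ρ := hrange ▸ hα
      exact this
    have hxW : (x : V) ∈ W := x.2.2
    have hQxB : Q (x : V) ∈ B := hQW x hxW
    obtain ⟨c, hc⟩ := (mem_span_range_iff_exists_fun F).mp x.2.1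
    have hPx : P (x : V) = ∑ i, c i • e i := by
      rw [hP]
      refine Finset.sum_congr rfl fun i _ => ?_
      rw [← hc, hsA]
    have hcα : ∀ j, ω α (f j) = c j := by
      intro j
      rw [← hxA]
      show ω (P (x : V)) (f j) = c j
      rw [hPx, hsA0]
    have hQx : Q (x : V) = ∑ j, (μ j * ω α (f j)) • f j := by
      rw [hQ]
      refine Finset.sum_congr rfl fun j _ => ?_
      have h1 : ω (e j) (x : V) = μ j * c j := by rw [← hc]; exact hsD μ c j
      rw [h1, hcα]
    rw [← hQx]
    exact hQxB
  have hg : ∀ α ∈ A, (∑ j, ω α (f j) • f j) ∈ B := by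
    intro α hα
    have := CL (fun _ => 1) (by simpa using hW3) α hα
    simpa using this
  have hh : ∀ α ∈ A, (∑ j, (lam j * ω α (f j)) • f j) ∈ B := fun α hα => CL lam hW4 α hα
  -- the map h and its surjectivity onto B
  set hmap : V →ₗ[F] V := ∑ j, lam j • ((ω.flip (f j)).smulRight (f j)) with hhmap
  have hhm : ∀ v, hmap v = ∑ j, (lam j * ω v (f j)) • f j := by
    intro v
    simp [hhmap, LinearMap.sum_apply, LinearMap.smulRight_apply, LinearMap.smul_apply,
      LinearMap.flip_apply, smul_smul]
  have hsurjB : ∀ β ∈ B, ∃ α ∈ A, hmap α = β := by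
    set ρ' : ↥A →ₗ[F] V := hmap ∘ₗ A.subtype with hρ'
    have hker : LinearMap.ker ρ' = ⊥ := by
      rw [eq_bot_iff]
      rintro ⟨x, hxA⟩ hx
      have hx' : hmap x = 0 := hx
      have hxf : ∀ j, ω x (f j) = 0 := by
        intro j
        have h1 : ω (e j) (hmap x) = lam j * ω x (f j) := by
          rw [hhm]; exact hsC (fun i => lam i * ω x (f i)) j
        rw [hx', map_zero] at h1
        rcases mul_eq_zero.mp h1.symm with h | h
        · exact absurd h (hlam0 j)
        · exact h
      have hPx : P x = 0 := by
        rw [hP]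
        exact Finset.sum_eq_zero fun j _ => by rw [hxf j, zero_smul]
      have : x = 0 := by rw [← hPE x hxA.1, hPx]
      simpa using this
    have hrange : LinearMap.range ρ' = B := by
      apply Submodule.eq_of_le_of_finrank_le
      · rintro _ ⟨x, rfl⟩
        show hmap (x : V) ∈ B
        rw [hhm]
        exact hh x x.2
      · have h1 := LinearMap.finrank_range_add_finrank_ker ρ'
        rw [hker, finrank_bot, add_zero] at h1
        rw [h1]
        clear_value a m
        omega
    intro β hβ
    have : β ∈ LinearMap.range ρ' := hrange ▸ hβ
    obtain ⟨x, hx⟩ := this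
    exact ⟨x, x.2, hx⟩
  -- iteration
  have ITER : ∀ n : ℕ, ∀ α, α ∈ A → ∃ α', α' ∈ A ∧
      ∀ j, ω α' (f j) = ((lam j)⁻¹) ^ n * ω α (f j) := by
    intro n
    induction n with
    | zero => intro α hα; exact ⟨α, hα, fun j => by simp⟩
    | succ n ih =>
      intro α hα
      obtain ⟨α₀, hα₀A, hα₀⟩ := hsurjB (∑ j, ω α (f j) • f j) (hg α hα)
      have hcoord : ∀ j, ω α₀ (f j) = (lam j)⁻¹ * ω α (f j) := by
        intro j
        have h1 : ω (e j) (hmap α₀) = lam j * ω α₀ (f j) := by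
          rw [hhm]; exact hsC (fun i => lam i * ω α₀ (f i)) j
        rw [hα₀, hsC] at h1
        rw [h1, ← mul_assoc, inv_mul_cancel₀ (hlam0 j), one_mul]
      obtain ⟨α', hα'A, hα'⟩ := ih α₀ hα₀A
      exact ⟨α', hα'A, fun j => by rw [hα' j, hcoord j]; ring⟩
  -- nonzero element of A
  have hapos : 0 < a := by clear_value a m; omega
  have hAne : A ≠ ⊥ := by
    intro h
    have := ha_def
    rw [h, finrank_bot] at this
    omega
  obtain ⟨α, hαA, hα0⟩ := Submodule.ne_bot_iff A |>.mp hAne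
  have hgB : (∑ j, ω α (f j) • f j) ∈ B := hg α hαA
  have hvan : ∀ n : ℕ, ∑ j, ((lam j)⁻¹) ^ n * (ω α (f j)) ^ 2 = 0 := by
    intro n
    obtain ⟨α', hα'A, hα'⟩ := ITER n α hαA
    have h0 : ω α' (∑ j, ω α (f j) • f j) = 0 :=
      hWiso α' hα'A.2 _ hgB.2
    have h2 : ω α' (∑ j, ω α (f j) • f j) = ∑ j, ω α (f j) * ω α' (f j) := by
      rw [map_sum]
      exact Finset.sum_congr rfl fun j _ => by rw [map_smul, smul_eq_mul]
    rw [h2] at h0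
    rw [← h0]
    refine Finset.sum_congr rfl fun j _ => ?_
    rw [hα' j]
    ring
  have hμinj : Function.Injective (fun j : Fin d => (lam j)⁻¹) :=
    fun i j h => hlaminj (inv_injective h)
  have hdet : ((Matrix.vandermonde (fun j : Fin d => (lam j)⁻¹)).transpose).det ≠ 0 := by
    rw [Matrix.det_transpose]
    exact Matrix.det_vandermonde_ne_zero_iff.mpr hμinj
  have hmv : (Matrix.vandermonde (fun j : Fin d => (lam j)⁻¹)).transpose.mulVec
      (fun j => (ω α (f j)) ^ 2) = 0 := by
    funext n
    have := hvan (n : ℕ)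
    simpa [Matrix.mulVec, dotProduct, Matrix.transpose_apply,
      Matrix.vandermonde] using this
  have hc0 := Matrix.eq_zero_of_mulVec_eq_zero hdet hmv
  have hαf : ∀ j, ω α (f j) = 0 := by
    intro j
    have := congrFun hc0 j
    exact sq_eq_zero_iff.mp this
  apply hα0
  have hPα : P α = 0 := by
    rw [hP]
    exact Finset.sum_eq_zero fun j _ => by rw [hαf j, zero_smul]
  rw [← hPE α hαA.1, hPα]

theorem sympl {F : Type*} [Field F] :
    ∀ (d : ℕ) (V : Type*) [AddCommGroup V] [Module F V] [FiniteDimensional F V]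
      (ω : LinearMap.BilinForm F V), ω.IsAlt → ω.Nondegenerate →
      Module.finrank F V = 2 * d →
      ∃ e f : Fin d → V, (∀ i j, ω (e i) (e j) = 0) ∧ (∀ i j, ω (f i) (f j) = 0) ∧
        (∀ i j, ω (e i) (f j) = if i = j then 1 else 0) := by
  intro d
  induction d with
  | zero => intro V _ _ _ ω _ _ _; exact ⟨finZeroElim, finZeroElim, by simp, by simp, by simp⟩
  | succ n ih =>
    intro V _ _ _ ω halt hnd hdim
    -- pick e0 ≠ 0
    have hnt : Nontrivial V := Module.nontrivial_of_finrank_pos (R := F) (by omega)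
    obtain ⟨e0, he0⟩ := exists_ne (0 : V)
    -- pick u with ω e0 u ≠ 0
    have : ∃ u, ω e0 u ≠ 0 := by
      by_contra h; push_neg at h; exact he0 (hnd.1 e0 h)
    obtain ⟨u, hu⟩ := this
    obtain ⟨f0, h1⟩ : ∃ f0, ω e0 f0 = 1 :=
      ⟨(ω e0 u)⁻¹ • u, by simp [map_smul, smul_eq_mul, inv_mul_cancel₀ hu]⟩
    have h2 : ω f0 e0 = -1 := by
      have := halt.neg_eq e0 f0; rw [h1] at this; exact this.symm
    have hee : ω e0 e0 = 0 := halt e0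
    have hff : ω f0 f0 = 0 := halt f0
    -- the symplectic complement
    set V' : Submodule F V := LinearMap.ker (ω e0) ⊓ LinearMap.ker (ω f0) with hV'
    have memV' : ∀ v, v ∈ V' ↔ ω e0 v = 0 ∧ ω f0 v = 0 := by
      intro v; simp [hV', LinearMap.mem_ker]
    -- finrank V' = 2n
    have hdim' : Module.finrank F V' = 2 * n := by
      have hker : V' = LinearMap.ker ((ω e0).prod (ω f0)) := by
        rw [LinearMap.ker_prod]
      have hsurj : Function.Surjective ((ω e0).prod (ω f0)) := by
        rintro ⟨a, b⟩
        refine ⟨a • f0 - b • e0, ?_⟩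
        simp [LinearMap.prod_apply, map_smul, map_sub, h1, h2, hee, hff,
          smul_eq_mul, Prod.ext_iff]
      have := LinearMap.finrank_range_add_finrank_ker ((ω e0).prod (ω f0))
      rw [LinearMap.range_eq_top.mpr hsurj, finrank_top, hdim] at this
      have hF2 : Module.finrank F (F × F) = 2 := by
        simp [Module.finrank_prod]
      rw [hF2] at this
      rw [hker]; omega
    -- decomposition of arbitrary u
    have hdecomp : ∀ w : V, w - (ω e0 w) • f0 + (ω f0 w) • e0 ∈ V' := by
      intro w
      rw [memV']
      constructor
      · simp [map_sub, map_add, map_smul, h1, hee, smul_eq_mul]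
      · simp [map_sub, map_add, map_smul, h2, hff, smul_eq_mul]
    -- restricted form
    have halt' : (ω.restrict V').IsAlt := fun x => halt x
    have hnd' : (ω.restrict V').Nondegenerate := by
      refine (LinearMap.IsRefl.nondegenerate_iff_separatingLeft halt'.isRefl).mpr ?_
      intro v hv
      have hv' : ∀ w : V, ω (v : V) w = 0 := by
        intro w
        have hw := hdecomp w
        have h3 : ω (v : V) (w - (ω e0 w) • f0 + (ω f0 w) • e0) = 0 := hv ⟨_, hw⟩
        have h4 : ω (v : V) e0 = 0 := by
          have := halt.neg_eq e0 (v : V)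
          have hv1 : ω e0 (v : V) = 0 := ((memV' v).mp v.2).1
          rw [hv1, neg_zero] at this; exact this.symm
        have h5 : ω (v : V) f0 = 0 := by
          have := halt.neg_eq f0 (v : V)
          have hv2 : ω f0 (v : V) = 0 := ((memV' v).mp v.2).2
          rw [hv2, neg_zero] at this; exact this.symm
        rw [map_add, map_sub, map_smul, map_smul, h4, h5, smul_zero, smul_zero,
          sub_zero, add_zero] at h3
        exact h3
      have : (v : V) = 0 := hnd.1 v hv'
      exact Subtype.ext this
    obtain ⟨e', f', he'e', hf'f', he'f'⟩ := ih V' (ω.restrict V') halt' hnd' hdim'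
    refine ⟨Fin.cons e0 (fun i => (e' i : V)), Fin.cons f0 (fun i => (f' i : V)), ?_, ?_, ?_⟩
    · intro i j
      refine Fin.cases ?_ (fun i => ?_) i <;> refine Fin.cases ?_ (fun j => ?_) j
      · simpa using hee
      · simpa using ((memV' _).mp (e' j).2).1
      · have := halt.neg_eq e0 ((e' i : V))
        have h0 : ω e0 (e' i : V) = 0 := ((memV' _).mp (e' i).2).1
        simp only [Fin.cons_succ, Fin.cons_zero]
        rw [h0, neg_zero] at this; exact this.symm
      · simpa using he'e' i j
    · intro i j
      refine Fin.cases ?_ (fun i => ?_) i <;> refine Fin.cases ?_ (fun j => ?_) j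
      · simpa using hff
      · simpa using ((memV' _).mp (f' j).2).2
      · have := halt.neg_eq f0 ((f' i : V))
        have h0 : ω f0 (f' i : V) = 0 := ((memV' _).mp (f' i).2).2
        simp only [Fin.cons_succ, Fin.cons_zero]
        rw [h0, neg_zero] at this; exact this.symm
      · simpa using hf'f' i j
    · intro i j
      refine Fin.cases ?_ (fun i => ?_) i <;> refine Fin.cases ?_ (fun j => ?_) j
      · simpa using h1
      · simpa [(Fin.succ_ne_zero j).symm] using ((memV' _).mp (f' j).2).1
      · have := halt.neg_eq f0 ((e' i : V))
        have h0 : ω f0 (e' i : V) = 0 := ((memV' _).mp (e' i).2).2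
        simp only [Fin.cons_succ, Fin.cons_zero, Fin.succ_ne_zero, if_neg]
        rw [h0, neg_zero] at this; exact this.symm
      · have := he'f' i j
        simp only [Fin.cons_succ]
        rw [show ω (e' i : V) (f' j : V) = (ω.restrict V') (e' i) (f' j) from rfl, this]
        simp [Fin.succ_inj]



/-- Let `(V, ω)` be a symplectic vector space of dimension `2d` over an algebraically
closed field `F` and let `r ≥ 4`.  The locus `Z` of `r`-tuples of Lagrangian subspaces
`(Φ₁,…,Φ_r)` for which there exists a nonzero isotropic subspace `W` with
`dim(Φⱼ ∩ W) ≥ (1/2)·dim W` for all `j` is a *proper* (closed) subset of the `r`-fold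
product of Lagrangian Grassmannians: `Z ⊊ LGrass(V,ω)^r`. -/
theorem stmt13 {F V : Type*} [Field F] [IsAlgClosed F] [AddCommGroup V] [Module F V]
    [FiniteDimensional F V]
    (ω : LinearMap.BilinForm F V) (halt : ω.IsAlt) (hnd : ω.Nondegenerate)
    (d r : ℕ) (hdim : Module.finrank F V = 2 * d) (hr : 4 ≤ r) :
    {Φ : Fin r → Submodule F V |
        (∀ j, (∀ x ∈ Φ j, ∀ y ∈ Φ j, ω x y = 0) ∧ Module.finrank F (Φ j) = d) ∧
          ∃ W : Submodule F V, W ≠ ⊥ ∧ (∀ x ∈ W, ∀ y ∈ W, ω x y = 0) ∧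
            ∀ j, Module.finrank F W ≤ 2 * Module.finrank F ↥(Φ j ⊓ W)}
      ⊂ {Φ : Fin r → Submodule F V |
          ∀ j, (∀ x ∈ Φ j, ∀ y ∈ Φ j, ω x y = 0) ∧ Module.finrank F (Φ j) = d} := by
  classical
  rw [Set.ssubset_iff_of_subset (fun Φ hΦ => hΦ.1)]
  -- choose distinct nonzero scalars
  have h0 : ({(0:F)}ᶜ : Set F).Infinite := (Set.finite_singleton 0).infinite_compl
  let emb := h0.natEmbedding
  set lam : Fin d → F := fun i => (emb i.1 : F) with hlamdef
  have hlam0 : ∀ i, lam i ≠ 0 := fun i => (emb i.1).2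
  have hlaminj : Function.Injective lam := by
    intro i j h
    exact Fin.val_injective (emb.injective (Subtype.ext h))
  -- the symplectic basis
  obtain ⟨e, f, hee, hff, hef⟩ := sympl d V ω halt hnd hdim
  -- sum computations
  have hsA : ∀ (μ c : Fin d → F) (j : Fin d),
      ω (∑ i, c i • (e i + μ i • f i)) (f j) = c j := by
    intro μ c j
    simp [map_sum, map_add, map_smul, LinearMap.sum_apply, LinearMap.smul_apply,
      LinearMap.add_apply, hef, hff, smul_eq_mul, mul_ite, mul_one, mul_zero,
      Finset.sum_ite_eq']
  have hsC : ∀ (c : Fin d → F) (j : Fin d), ω (e j) (∑ i, c i • f i) = c j := by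
    intro c j
    simp [map_sum, map_smul, hef, smul_eq_mul, mul_ite, mul_one, mul_zero,
      Finset.sum_ite_eq']
  -- linear independence and finrank of the graph families
  have hindep : ∀ μ : Fin d → F, LinearIndependent F (fun i => e i + μ i • f i) := by
    intro μ
    rw [Fintype.linearIndependent_iff]
    intro g hg j
    have h2 := congrArg (fun v => ω v (f j)) hg
    rw [hsA] at h2
    simpa using h2
  have hfindep : LinearIndependent F f := by
    rw [Fintype.linearIndependent_iff]
    intro g hg j
    have h2 := congrArg (⇑(ω (e j))) hg
    rw [hsC] at h2
    simpa using h2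
  have hfin : ∀ μ : Fin d → F,
      Module.finrank F ↥(span F (Set.range (fun i => e i + μ i • f i))) = d := by
    intro μ
    rw [finrank_span_eq_card (hindep μ), Fintype.card_fin]
  have he0 : (fun i => e i + (0 : Fin d → F) i • f i) = e := by
    funext i; simp
  -- the four Lagrangians
  set E : Submodule F V := span F (Set.range e) with hE
  set Fs : Submodule F V := span F (Set.range f) with hFs
  set G1 : Submodule F V := span F (Set.range (fun i => e i + (1:F) • f i)) with hG1
  set Glam : Submodule F V := span F (Set.range (fun i => e i + lam i • f i)) with hGL
  have hEfin : Module.finrank F ↥E = d := by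
    rw [hE, ← he0]; exact hfin 0
  have hFfin : Module.finrank F ↥Fs = d := by
    rw [hFs, finrank_span_eq_card hfindep, Fintype.card_fin]
  have hG1fin : Module.finrank F ↥G1 = d := hfin _
  have hGLfin : Module.finrank F ↥Glam = d := hfin _
  have hEiso : ∀ x ∈ E, ∀ y ∈ E, ω x y = 0 := by
    apply span_iso; rintro x ⟨i, rfl⟩ y ⟨j, rfl⟩; exact hee i j
  have hFiso : ∀ x ∈ Fs, ∀ y ∈ Fs, ω x y = 0 := by
    apply span_iso; rintro x ⟨i, rfl⟩ y ⟨j, rfl⟩; exact hff i j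
  have hfe : ∀ i j, ω (f i) (e j) = if i = j then -1 else 0 := by
    intro i j
    have h := halt.neg_eq (e j) (f i)
    rw [hef] at h
    rw [← h]
    by_cases hij : i = j <;> simp [hij, eq_comm]
  have hG1iso : ∀ x ∈ G1, ∀ y ∈ G1, ω x y = 0 := by
    apply span_iso
    rintro x ⟨i, rfl⟩ y ⟨j, rfl⟩
    simp only [map_add, map_smul, LinearMap.add_apply, LinearMap.smul_apply,
      hee, hef, hfe, hff, smul_eq_mul]
    by_cases hij : i = j
    · subst hij; simp
    · simp [hij]
  have hGLiso : ∀ x ∈ Glam, ∀ y ∈ Glam, ω x y = 0 := by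
    apply span_iso
    rintro x ⟨i, rfl⟩ y ⟨j, rfl⟩
    simp only [map_add, map_smul, LinearMap.add_apply, LinearMap.smul_apply,
      hee, hef, hfe, hff, smul_eq_mul]
    by_cases hij : i = j
    · subst hij; simp
    · simp [hij]
  -- the witness tuple
  set Φ : Fin r → Submodule F V := fun j =>
    if j.val = 0 then E else if j.val = 1 then Fs else if j.val = 2 then G1
      else if j.val = 3 then Glam else E with hΦdef
  have hΦcases : ∀ j, Φ j = E ∨ Φ j = Fs ∨ Φ j = G1 ∨ Φ j = Glam := by
    intro j
    rw [hΦdef]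
    dsimp only
    split_ifs <;> tauto
  refine ⟨Φ, ?_, ?_⟩
  · intro j
    rcases hΦcases j with h | h | h | h <;> rw [h]
    · exact ⟨hEiso, hEfin⟩
    · exact ⟨hFiso, hFfin⟩
    · exact ⟨hG1iso, hG1fin⟩
    · exact ⟨hGLiso, hGLfin⟩
  · rintro ⟨-, W, hWne, hWiso, hWle⟩
    have hΦ0 : Φ ⟨0, by omega⟩ = E := by simp [hΦdef]
    have hΦ1 : Φ ⟨1, by omega⟩ = Fs := by simp [hΦdef]
    have hΦ2 : Φ ⟨2, by omega⟩ = G1 := by simp [hΦdef]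
    have hΦ3 : Φ ⟨3, by omega⟩ = Glam := by simp [hΦdef]
    refine key ω halt d hdim e f hee hff hef lam hlam0 hlaminj W hWne hWiso ?_ ?_ ?_ ?_
    · have := hWle ⟨0, by omega⟩; rwa [hΦ0, hE] at this
    · have := hWle ⟨1, by omega⟩; rwa [hΦ1, hFs] at this
    · have := hWle ⟨2, by omega⟩; rwa [hΦ2, hG1] at this
    · have := hWle ⟨3, by omega⟩; rwa [hΦ3, hGL] at this
end

section
/- Let A → B be a graded quasi-isomorphism of sequences of complexes of abelian sheaves (i.e., a morphism of ℤ-indexed decreasing sequences of complexes inducing quasi-isomorphisms on all graded pieces gr^i = cone(F^{i+1} → F^i)), and suppose A has filtered cohomology objects, meaning the maps H^j(F^{i+1}A) → H^j(F^iA) are injective for all i, j. Then: (1) B also has filtered cohomology objects; (2) the induced maps on completions of cohomology with respect to the filtration, H^j(A)^∧ → H^j(B)^∧, are isomorphisms for all j. -/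
open CategoryTheory CategoryTheory.Limits

namespace Stmt16Aux

open CategoryTheory.Abelian CategoryTheory.Category
open scoped Pseudoelement

variable {C : Type*} [Category C] [Abelian C]

/-- Transport `IsIso` of a `cokernel.map` along equalities of the horizontal maps. -/
lemma isIso_cokernel_map_of_eq {X Y X' Y' : C} {f : X ⟶ Y} {g : X' ⟶ Y'}
    (f' : X ⟶ Y) (g' : X' ⟶ Y') {p : X ⟶ X'} {q : Y ⟶ Y'}
    (hf : f = f') (hg : g = g') {w : f ≫ q = p ≫ g} {w' : f' ≫ q = p ≫ g'}
    (h : IsIso (cokernel.map f g p q w)) : IsIso (cokernel.map f' g' p q w') := by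
  subst hf; subst hg; exact h

lemma isIso_descCokernel {S : ShortComplex C} (hS : S.Exact) [Epi S.g] :
    IsIso (cokernel.desc S.f S.g S.zero) := by
  refine ⟨hS.desc (cokernel.π S.f) (cokernel.condition S.f), ?_, ?_⟩
  · apply coequalizer.hom_ext
    simp
  · rw [← cancel_epi S.g]
    simp

/-- Short five-lemma style statement: a morphism of "exact + epi" short complexes whose
third component is an isomorphism induces an isomorphism on cokernels of the first maps. -/
lemma isIso_cokernelMap_of_exact {S₁ S₂ : ShortComplex C} (ψ : S₁ ⟶ S₂)
    (h₁ : S₁.Exact) (h₂ : S₂.Exact) [Epi S₁.g] [Epi S₂.g] [IsIso ψ.τ₃] :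
    IsIso (cokernel.map S₁.f S₂.f ψ.τ₁ ψ.τ₂ ψ.comm₁₂.symm) := by
  have d₁ := isIso_descCokernel h₁
  have d₂ := isIso_descCokernel h₂
  have key : cokernel.map S₁.f S₂.f ψ.τ₁ ψ.τ₂ ψ.comm₁₂.symm ≫
      cokernel.desc S₂.f S₂.g S₂.zero = cokernel.desc S₁.f S₁.g S₁.zero ≫ ψ.τ₃ := by
    apply coequalizer.hom_ext
    simp [ψ.comm₂₃]
  have : cokernel.map S₁.f S₂.f ψ.τ₁ ψ.τ₂ ψ.comm₁₂.symm =
      cokernel.desc S₁.f S₁.g S₁.zero ≫ ψ.τ₃ ≫ inv (cokernel.desc S₂.f S₂.g S₂.zero) := by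
    rw [← Category.assoc, ← key, Category.assoc, IsIso.hom_inv_id, Category.comp_id]
  rw [this]
  infer_instance

/-- For monos `u`, `v`, the sequence `coker u → coker (u ≫ v) → coker v` is short exact. -/
lemma shortExact_cokernels {X₂ X₁ X₀ : C} (u : X₂ ⟶ X₁) (v : X₁ ⟶ X₀) [Mono v] :
    (ShortComplex.mk
      (cokernel.map u (u ≫ v) (𝟙 X₂) v (by simp))
      (cokernel.map (u ≫ v) v u (𝟙 X₀) (by simp))
      (by
        rw [← cancel_epi (cokernel.π u)]
        simp)).ShortExact := by
  have hexact : ∀ b, _ → _ := Pseudoelement.pseudo_exact_of_exact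
    (S := ShortComplex.mk u (cokernel.π u) (cokernel.condition u))
    (ShortComplex.exact_of_g_is_cokernel _ (cokernelIsCokernel u))
  have hexact' : ∀ b, _ → _ := Pseudoelement.pseudo_exact_of_exact
    (S := ShortComplex.mk (u ≫ v) (cokernel.π (u ≫ v)) (cokernel.condition (u ≫ v)))
    (ShortComplex.exact_of_g_is_cokernel _ (cokernelIsCokernel (u ≫ v)))
  have hexact'' : ∀ b, _ → _ := Pseudoelement.pseudo_exact_of_exact
    (S := ShortComplex.mk v (cokernel.π v) (cokernel.condition v))
    (ShortComplex.exact_of_g_is_cokernel _ (cokernelIsCokernel v))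
  set α := cokernel.map u (u ≫ v) (𝟙 X₂) v (by simp) with hα
  set β := cokernel.map (u ≫ v) v u (𝟙 X₀) (by simp) with hβ
  have facα : cokernel.π u ≫ α = v ≫ cokernel.π (u ≫ v) := by simp [hα]
  have facβ : cokernel.π (u ≫ v) ≫ β = cokernel.π v := by simp [hβ]
  have hepi : Epi β := epi_of_epi_fac facβ
  have hmono : Mono α := by
    apply Pseudoelement.mono_of_zero_of_map_zero
    intro a ha
    obtain ⟨x, rfl⟩ := Pseudoelement.pseudo_surjective_of_epi (cokernel.π u) a
    have h1 : (cokernel.π (u ≫ v)) ((v : X₁ ⟶ X₀) x) = 0 := by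
      rw [← Pseudoelement.comp_apply, ← facα, Pseudoelement.comp_apply, ha]
    obtain ⟨x₂, hx₂⟩ := hexact' _ h1
    have h2 : (v : X₁ ⟶ X₀) ((u : X₂ ⟶ X₁) x₂) = (v : X₁ ⟶ X₀) x := by
      rw [← Pseudoelement.comp_apply]; exact hx₂
    have h3 : (u : X₂ ⟶ X₁) x₂ = x := Pseudoelement.pseudo_injective_of_mono v h2
    rw [← h3, ← Pseudoelement.comp_apply,
      show u ≫ cokernel.π u = 0 from cokernel.condition u]
    exact Pseudoelement.zero_apply _ x₂
  have hex : (ShortComplex.mk α β (by rw [← cancel_epi (cokernel.π u)]; simp [hα, hβ])).Exact := by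
    apply Pseudoelement.exact_of_pseudo_exact
    intro b hb
    obtain ⟨x₀, rfl⟩ := Pseudoelement.pseudo_surjective_of_epi (cokernel.π (u ≫ v)) b
    have hb' : Pseudoelement.pseudoApply β
        (Pseudoelement.pseudoApply (cokernel.π (u ≫ v)) x₀) = 0 := hb
    rw [← Pseudoelement.comp_apply, facβ] at hb'
    have h1 : Pseudoelement.pseudoApply (cokernel.π v) x₀ = 0 := hb'
    obtain ⟨x₁, hx₁⟩ := hexact'' _ h1
    have hx₁' : Pseudoelement.pseudoApply v x₁ = x₀ := hx₁
    refine ⟨Pseudoelement.pseudoApply (cokernel.π u) x₁, ?_⟩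
    have : Pseudoelement.pseudoApply α (Pseudoelement.pseudoApply (cokernel.π u) x₁) =
        Pseudoelement.pseudoApply (cokernel.π (u ≫ v)) x₀ := by
      rw [← Pseudoelement.comp_apply, facα, Pseudoelement.comp_apply, hx₁']
    exact this
  exact { exact := hex, mono_f := hmono, epi_g := hepi }
  
lemma isIso_of_isZero {X Y : C} (f : X ⟶ Y) (hX : IsZero X) (hY : IsZero Y) : IsIso f :=
  ⟨0, hX.eq_of_src _ _, hY.eq_of_src _ _⟩

lemma isZero_cokernel_id (X : C) : IsZero (cokernel (𝟙 X)) := by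
  rw [IsZero.iff_id_eq_zero, ← cancel_epi (cokernel.π (𝟙 X))]
  simp [cokernel.π_of_epi]

/-- composition of cokernel isomorphisms along a two-step filtration. -/
lemma isIso_cokernel_map_comp
    {X₂ X₁ X₀ Y₂ Y₁ Y₀ : C} (u : X₂ ⟶ X₁) (v : X₁ ⟶ X₀) (u' : Y₂ ⟶ Y₁) (v' : Y₁ ⟶ Y₀)
    (f₂ : X₂ ⟶ Y₂) (f₁ : X₁ ⟶ Y₁) (f₀ : X₀ ⟶ Y₀) [Mono v] [Mono v']
    (wu : u ≫ f₁ = f₂ ≫ u') (wv : v ≫ f₀ = f₁ ≫ v')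
    (hu : IsIso (cokernel.map u u' f₂ f₁ wu)) (hv : IsIso (cokernel.map v v' f₁ f₀ wv)) :
    IsIso (cokernel.map (u ≫ v) (u' ≫ v') f₂ f₀
      (by rw [Category.assoc, wv, reassoc_of% wu])) := by
  have hSA := shortExact_cokernels u v
  have hSB := shortExact_cokernels u' v'
  let ψ : ShortComplex.mk
        (cokernel.map u (u ≫ v) (𝟙 X₂) v (by simp))
        (cokernel.map (u ≫ v) v u (𝟙 X₀) (by simp))
        (by rw [← cancel_epi (cokernel.π u)]; simp) ⟶
      ShortComplex.mk
        (cokernel.map u' (u' ≫ v') (𝟙 Y₂) v' (by simp))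
        (cokernel.map (u' ≫ v') v' u' (𝟙 Y₀) (by simp))
        (by rw [← cancel_epi (cokernel.π u')]; simp) :=
    { τ₁ := cokernel.map u u' f₂ f₁ wu
      τ₂ := cokernel.map (u ≫ v) (u' ≫ v') f₂ f₀ (by rw [Category.assoc, wv, reassoc_of% wu])
      τ₃ := cokernel.map v v' f₁ f₀ wv
      comm₁₂ := by
        apply coequalizer.hom_ext
        simp [reassoc_of% wv]
      comm₂₃ := by
        apply coequalizer.hom_ext
        simp }
  have h1 : IsIso ψ.τ₁ := hu
  have h3 : IsIso ψ.τ₃ := hv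
  have h2 := ShortComplex.isIso₂_of_shortExact_of_isIso₁₃ ψ hSA hSB
  exact h2

section Homology

open CochainComplex HomologicalComplex

/-- The homology iso, with its target written as `K.homology n`. -/
noncomputable def eI (n : ℤ) (K : CochainComplex C ℤ) :
    ((HomotopyCategory.homologyFunctor C (ComplexShape.up ℤ) 0).shift n).obj
      ((HomotopyCategory.quotient C (ComplexShape.up ℤ)).obj K) ≅ K.homology n :=
  (HomotopyCategory.homologyFunctorFactors C (ComplexShape.up ℤ) n).app K

lemma shift_Q_map {K L : CochainComplex C ℤ} (u : K ⟶ L) (n : ℤ) :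
    ((HomotopyCategory.homologyFunctor C (ComplexShape.up ℤ) 0).shift n).map
        ((HomotopyCategory.quotient C (ComplexShape.up ℤ)).map u) =
      (eI n K).hom ≫
        homologyMap u n ≫
        (eI n L).inv := by
  have h := (HomotopyCategory.homologyFunctorFactors C (ComplexShape.up ℤ) n).hom.naturality u
  dsimp at h
  rw [← cancel_mono (eI n L).hom]
  simp only [Category.assoc, Iso.inv_hom_id, Category.comp_id]
  exact h

/-- The one-step lemma: a quasi-isomorphism on mapping cones transfers filtered
monomorphy and induces isomorphisms of the one-step cokernels. -/
lemma one_step {K L K' L' : CochainComplex C ℤ} (f : K ⟶ L) (g : K' ⟶ L')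
    (a : K ⟶ K') (b : L ⟶ L') (w : f ≫ b = a ≫ g)
    [hq : QuasiIso (CochainComplex.mappingCone.map f g a b w)]
    (hf : ∀ j : ℤ, Mono (homologyMap f j)) :
    (∀ j : ℤ, Mono (homologyMap g j)) ∧
    (∀ j : ℤ, IsIso (cokernel.map (homologyMap f j) (homologyMap g j)
      (homologyMap a j) (homologyMap b j)
      (by rw [← homologyMap_comp, ← homologyMap_comp, w]))) := by
  set F := HomotopyCategory.homologyFunctor C (ComplexShape.up ℤ) 0 with hFdef
  have hT₁ := HomotopyCategory.mappingCone_triangleh_distinguished f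
  have hT₂ := HomotopyCategory.mappingCone_triangleh_distinguished g
  set e := fun n => HomotopyCategory.homologyFunctorFactors C (ComplexShape.up ℤ) n with hedef
  -- δ for the triangle of f vanishes
  have hδ₁ : ∀ (n₀ n₁ : ℤ) (h : n₀ + 1 = n₁),
      F.homologySequenceδ (CochainComplex.mappingCone.triangleh f) n₀ n₁ h = 0 := by
    intro n₀ n₁ h
    refine (F.homologySequence_mono_shift_map_mor₁_iff _ hT₁ n₀ n₁ h).1 ?_
    show Mono ((F.shift n₁).map
      ((HomotopyCategory.quotient C (ComplexShape.up ℤ)).map f))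
    rw [shift_Q_map]
    have := hf n₁
    infer_instance
  -- the triangle morphism induced by (a, b)
  set ψ := (HomotopyCategory.quotient C (ComplexShape.up ℤ)).mapTriangle.map
      (CochainComplex.mappingCone.triangleMap f g a b w) with hψdef
  have hconeIso : ∀ n : ℤ, IsIso ((F.shift n).map
      ((HomotopyCategory.quotient C (ComplexShape.up ℤ)).map
        (CochainComplex.mappingCone.map f g a b w))) := by
    intro n
    rw [shift_Q_map]
    have : IsIso (homologyMap (CochainComplex.mappingCone.map f g a b w) n) := by
      rw [← quasiIsoAt_iff_isIso_homologyMap]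
      infer_instance
    infer_instance
  have hδ₂ : ∀ (n₀ n₁ : ℤ) (h : n₀ + 1 = n₁),
      F.homologySequenceδ (CochainComplex.mappingCone.triangleh g) n₀ n₁ h = 0 := by
    intro n₀ n₁ h
    have hnat := F.homologySequenceδ_naturality _ _ ψ n₀ n₁ h
    rw [hδ₁ n₀ n₁ h, zero_comp] at hnat
    have hi : IsIso ((F.shift n₀).map ψ.hom₃) := hconeIso n₀
    rw [← cancel_epi ((F.shift n₀).map ψ.hom₃), comp_zero, hnat]
  -- monomorphy for g
  have hmg : ∀ j : ℤ, Mono (homologyMap g j) := by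
    intro j
    have h1 : Mono ((F.shift j).map (CochainComplex.mappingCone.triangleh g).mor₁) :=
      (F.homologySequence_mono_shift_map_mor₁_iff _ hT₂ (j - 1) j (by omega)).2
        (hδ₂ (j - 1) j (by omega))
    have h2 : Mono ((F.shift j).map
        ((HomotopyCategory.quotient C (ComplexShape.up ℤ)).map g)) := h1
    rw [shift_Q_map] at h2
    have heq : homologyMap g j =
        (eI j K').inv ≫ ((eI j K').hom ≫ homologyMap g j ≫ (eI j L').inv) ≫
          (eI j L').hom := by simp
    rw [heq]
    infer_instance
  refine ⟨hmg, fun j => ?_⟩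
  -- short exact complexes of homology at the cochain complex level
  have zf : homologyMap f j ≫ homologyMap (CochainComplex.mappingCone.inr f) j = 0 := by
    rw [← homologyMap_comp]
    exact ((HomologicalComplex.homotopyCofiber.inrCompHomotopy f
      (fun k => ⟨k - 1, by simp⟩)).homologyMap_eq j).trans (by simp; rfl)
  have zg : homologyMap g j ≫ homologyMap (CochainComplex.mappingCone.inr g) j = 0 := by
    rw [← homologyMap_comp]
    exact ((HomologicalComplex.homotopyCofiber.inrCompHomotopy g
      (fun k => ⟨k - 1, by simp⟩)).homologyMap_eq j).trans (by simp; rfl)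
  set S₁ := ShortComplex.mk (homologyMap f j)
    (homologyMap (CochainComplex.mappingCone.inr f) j) zf with hS₁def
  set S₂ := ShortComplex.mk (homologyMap g j)
    (homologyMap (CochainComplex.mappingCone.inr g) j) zg with hS₂def
  -- identification with the homology sequence of the distinguished triangle
  have isoS₁ : ShortComplex.mk
      ((F.shift j).map (CochainComplex.mappingCone.triangleh f).mor₁)
      ((F.shift j).map (CochainComplex.mappingCone.triangleh f).mor₂)
      (F.homologySequence_comp _ hT₁ j) ≅ S₁ := by
    refine ShortComplex.isoMk (eI j K) (eI j L)
      (eI j (CochainComplex.mappingCone f)) ?_ ?_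
    · show (eI j K).hom ≫ homologyMap f j =
        (F.shift j).map ((HomotopyCategory.quotient C (ComplexShape.up ℤ)).map f) ≫
          (eI j L).hom
      rw [shift_Q_map]
      simp
    · show (eI j L).hom ≫ homologyMap (CochainComplex.mappingCone.inr f) j =
        (F.shift j).map ((HomotopyCategory.quotient C (ComplexShape.up ℤ)).map
          (CochainComplex.mappingCone.inr f)) ≫
            (eI j (CochainComplex.mappingCone f)).hom
      rw [shift_Q_map]
      simp
  have isoS₂ : ShortComplex.mk
      ((F.shift j).map (CochainComplex.mappingCone.triangleh g).mor₁)
      ((F.shift j).map (CochainComplex.mappingCone.triangleh g).mor₂)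
      (F.homologySequence_comp _ hT₂ j) ≅ S₂ := by
    refine ShortComplex.isoMk (eI j K') (eI j L')
      (eI j (CochainComplex.mappingCone g)) ?_ ?_
    · show (eI j K').hom ≫ homologyMap g j =
        (F.shift j).map ((HomotopyCategory.quotient C (ComplexShape.up ℤ)).map g) ≫
          (eI j L').hom
      rw [shift_Q_map]
      simp
    · show (eI j L').hom ≫ homologyMap (CochainComplex.mappingCone.inr g) j =
        (F.shift j).map ((HomotopyCategory.quotient C (ComplexShape.up ℤ)).map
          (CochainComplex.mappingCone.inr g)) ≫
            (eI j (CochainComplex.mappingCone g)).hom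
      rw [shift_Q_map]
      simp
  have ex₁ : S₁.Exact := ShortComplex.exact_of_iso isoS₁ (F.homologySequence_exact₂ _ hT₁ j)
  have ex₂ : S₂.Exact := ShortComplex.exact_of_iso isoS₂ (F.homologySequence_exact₂ _ hT₂ j)
  have epi₁ : Epi S₁.g := by
    have h1 : Epi ((F.shift j).map
        ((HomotopyCategory.quotient C (ComplexShape.up ℤ)).map
          (CochainComplex.mappingCone.inr f))) :=
      (F.homologySequence_epi_shift_map_mor₂_iff _ hT₁ j (j + 1) rfl).2 (hδ₁ j (j + 1) rfl)
    rw [shift_Q_map] at h1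
    have heq : homologyMap (CochainComplex.mappingCone.inr f) j =
        (eI j L).inv ≫ ((eI j L).hom ≫
            homologyMap (CochainComplex.mappingCone.inr f) j ≫
            (eI j (CochainComplex.mappingCone f)).inv) ≫
          (eI j (CochainComplex.mappingCone f)).hom := by simp
    show Epi (homologyMap (CochainComplex.mappingCone.inr f) j)
    rw [heq]
    infer_instance
  have epi₂ : Epi S₂.g := by
    have h1 : Epi ((F.shift j).map
        ((HomotopyCategory.quotient C (ComplexShape.up ℤ)).map
          (CochainComplex.mappingCone.inr g))) :=
      (F.homologySequence_epi_shift_map_mor₂_iff _ hT₂ j (j + 1) rfl).2 (hδ₂ j (j + 1) rfl)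
    rw [shift_Q_map] at h1
    have heq : homologyMap (CochainComplex.mappingCone.inr g) j =
        (eI j L').inv ≫ ((eI j L').hom ≫
            homologyMap (CochainComplex.mappingCone.inr g) j ≫
            (eI j (CochainComplex.mappingCone g)).inv) ≫
          (eI j (CochainComplex.mappingCone g)).hom := by simp
    show Epi (homologyMap (CochainComplex.mappingCone.inr g) j)
    rw [heq]
    infer_instance
  let Ψ : S₁ ⟶ S₂ :=
    { τ₁ := homologyMap a j
      τ₂ := homologyMap b j
      τ₃ := homologyMap (CochainComplex.mappingCone.map f g a b w) j
      comm₁₂ := by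
        show homologyMap a j ≫ homologyMap g j = homologyMap f j ≫ homologyMap b j
        rw [← homologyMap_comp, ← homologyMap_comp, w]
      comm₂₃ := by
        show homologyMap b j ≫ homologyMap (CochainComplex.mappingCone.inr g) j =
          homologyMap (CochainComplex.mappingCone.inr f) j ≫
            homologyMap (CochainComplex.mappingCone.map f g a b w) j
        rw [← homologyMap_comp, ← homologyMap_comp,
          CochainComplex.mappingCone.map_eq_mapOfHomotopy,
          CochainComplex.mappingCone.triangleMapOfHomotopy_comm₂] }
  haveI : Epi S₁.g := epi₁
  haveI : Epi S₂.g := epi₂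
  haveI hτ₃ : IsIso Ψ.τ₃ := by
    show IsIso (homologyMap (CochainComplex.mappingCone.map f g a b w) j)
    rw [← quasiIsoAt_iff_isIso_homologyMap]
    infer_instance
  exact isIso_cokernelMap_of_exact Ψ ex₁ ex₂

end Homology

end Stmt16Aux

/-- Let `A → B` be a morphism of sequences of complexes in an abelian category `C`
(a sequence of complexes is a functor `ℤᵒᵖ ⥤ CochainComplex C ℤ`, the `i`-th term being
`F^i A = A(op i)` with transition maps `F^{i+1}A → F^iA`).  Assume it is a *graded
quasi-isomorphism*, i.e. the induced morphisms on the mapping cones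
`gr^i = cone(F^{i+1} → F^i)` are quasi-isomorphisms, and that `A` has *filtered
cohomology objects*, i.e. the maps `H^j(F^{i+1}A) → H^j(F^iA)` are monomorphisms for
all `i, j`.  Then:
(1) `B` also has filtered cohomology objects; and
(2) the induced maps on the completions of cohomology with respect to the filtration
are isomorphisms; concretely, for all `k ≥ i` and all `j`, the induced map
`H^j(F^iA)/H^j(F^kA) → H^j(F^iB)/H^j(F^kB)` (a map of cokernels) is an isomorphism,
and hence so is the induced map on inverse limits `H^j(A)^∧ → H^j(B)^∧`. -/
theorem stmt16 {C : Type*} [Category C] [Abelian C]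
    (A B : ℤᵒᵖ ⥤ CochainComplex C ℤ) (φ : A ⟶ B)
    (hA : ∀ i j : ℤ, Mono (HomologicalComplex.homologyMap
        (A.map (homOfLE (show i ≤ i + 1 by omega)).op) j))
    (hgr : ∀ i : ℤ, ∃ w : A.map (homOfLE (show i ≤ i + 1 by omega)).op ≫ φ.app (Opposite.op i) =
        φ.app (Opposite.op (i + 1)) ≫ B.map (homOfLE (show i ≤ i + 1 by omega)).op, QuasiIso (CochainComplex.mappingCone.map
        (A.map (homOfLE (show i ≤ i + 1 by omega)).op)
        (B.map (homOfLE (show i ≤ i + 1 by omega)).op)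
        (φ.app (Opposite.op (i + 1))) (φ.app (Opposite.op i)) w)) :
    (∀ i j : ℤ, Mono (HomologicalComplex.homologyMap
        (B.map (homOfLE (show i ≤ i + 1 by omega)).op) j)) ∧
    (∀ (i k : ℤ) (h : i ≤ k) (j : ℤ), ∃ w, IsIso (cokernel.map
        (HomologicalComplex.homologyMap (A.map (homOfLE h).op) j)
        (HomologicalComplex.homologyMap (B.map (homOfLE h).op) j)
        (HomologicalComplex.homologyMap (φ.app (Opposite.op k)) j)
        (HomologicalComplex.homologyMap (φ.app (Opposite.op i)) j) w)) := by
  open HomologicalComplex in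
  -- one-step consequences
  have step : ∀ i : ℤ,
      (∀ j : ℤ, Mono (homologyMap (B.map (homOfLE (show i ≤ i + 1 by omega)).op) j)) ∧
      (∀ j : ℤ, IsIso (cokernel.map
        (homologyMap (A.map (homOfLE (show i ≤ i + 1 by omega)).op) j)
        (homologyMap (B.map (homOfLE (show i ≤ i + 1 by omega)).op) j)
        (homologyMap (φ.app (Opposite.op (i + 1))) j)
        (homologyMap (φ.app (Opposite.op i)) j)
        (by rw [← homologyMap_comp, ← homologyMap_comp, φ.naturality]))) := by
    intro i
    obtain ⟨w, hw⟩ := hgr i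
    haveI := hw
    have h := Stmt16Aux.one_step
      (A.map (homOfLE (show i ≤ i + 1 by omega)).op)
      (B.map (homOfLE (show i ≤ i + 1 by omega)).op)
      (φ.app (Opposite.op (i + 1))) (φ.app (Opposite.op i)) w
      (fun j => hA i j)
    exact ⟨h.1, fun j => h.2 j⟩
  refine ⟨fun i j => (step i).1 j, ?_⟩
  -- commutation of the general squares
  have wgen : ∀ (i k : ℤ) (h : i ≤ k) (j : ℤ),
      homologyMap (A.map (homOfLE h).op) j ≫ homologyMap (φ.app (Opposite.op i)) j =
        homologyMap (φ.app (Opposite.op k)) j ≫ homologyMap (B.map (homOfLE h).op) j := by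
    intro i k h j
    rw [← homologyMap_comp, ← homologyMap_comp, φ.naturality]
  -- composition of transition maps
  have compA : ∀ (i k : ℤ) (h : i ≤ k),
      A.map (homOfLE (show i ≤ k + 1 by omega)).op =
        A.map (homOfLE (show k ≤ k + 1 by omega)).op ≫ A.map (homOfLE h).op := by
    intro i k h
    rw [← A.map_comp, ← op_comp, homOfLE_comp]
  have compB : ∀ (i k : ℤ) (h : i ≤ k),
      B.map (homOfLE (show i ≤ k + 1 by omega)).op =
        B.map (homOfLE (show k ≤ k + 1 by omega)).op ≫ B.map (homOfLE h).op := by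
    intro i k h
    rw [← B.map_comp, ← op_comp, homOfLE_comp]
  -- monomorphy of composite transition maps
  have monoA : ∀ (i j k : ℤ) (h : i ≤ k),
      Mono (homologyMap (A.map (homOfLE h).op) j) := by
    intro i j k hik
    refine Int.le_induction
      (motive := fun k _ => ∀ h : i ≤ k, Mono (homologyMap (A.map (homOfLE h).op) j))
      ?_ ?_ k hik hik
    · intro h
      have e1 : (homOfLE h).op = 𝟙 (Opposite.op i) := rfl
      rw [e1, A.map_id, homologyMap_id]
      infer_instance
    · intro k hk IH h
      rw [compA i k hk, homologyMap_comp]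
      have h1 := hA k j
      have h2 := IH hk
      exact mono_comp _ _
  have monoB : ∀ (i j k : ℤ) (h : i ≤ k),
      Mono (homologyMap (B.map (homOfLE h).op) j) := by
    intro i j k hik
    refine Int.le_induction
      (motive := fun k _ => ∀ h : i ≤ k, Mono (homologyMap (B.map (homOfLE h).op) j))
      ?_ ?_ k hik hik
    · intro h
      have e1 : (homOfLE h).op = 𝟙 (Opposite.op i) := rfl
      rw [e1, B.map_id, homologyMap_id]
      infer_instance
    · intro k hk IH h
      rw [compB i k hk, homologyMap_comp]
      have h1 := (step k).1 j
      have h2 := IH hk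
      exact mono_comp _ _
  intro i k hik j
  refine ⟨wgen i k hik j, ?_⟩
  refine Int.le_induction
    (motive := fun k _ => ∀ h : i ≤ k, IsIso (cokernel.map
      (homologyMap (A.map (homOfLE h).op) j)
      (homologyMap (B.map (homOfLE h).op) j)
      (homologyMap (φ.app (Opposite.op k)) j)
      (homologyMap (φ.app (Opposite.op i)) j) (wgen i k h j)))
    ?_ ?_ k hik hik
  · intro h
    have e1 : (homOfLE h).op = 𝟙 (Opposite.op i) := rfl
    refine Stmt16Aux.isIso_cokernel_map_of_eq
      (f := 𝟙 _) (g := 𝟙 _) (w := by simp) _ _ ?_ ?_ ?_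
    · rw [e1, A.map_id, homologyMap_id]
    · rw [e1, B.map_id, homologyMap_id]
    · apply Stmt16Aux.isIso_of_isZero
      · exact Stmt16Aux.isZero_cokernel_id _
      · exact Stmt16Aux.isZero_cokernel_id _
  · intro k hk IH h
    haveI := monoA i j k hk
    haveI := monoB i j k hk
    have honestep := (step k).2 j
    have hcomp := Stmt16Aux.isIso_cokernel_map_comp
      (homologyMap (A.map (homOfLE (show k ≤ k + 1 by omega)).op) j)
      (homologyMap (A.map (homOfLE hk).op) j)
      (homologyMap (B.map (homOfLE (show k ≤ k + 1 by omega)).op) j)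
      (homologyMap (B.map (homOfLE hk).op) j)
      (homologyMap (φ.app (Opposite.op (k + 1))) j)
      (homologyMap (φ.app (Opposite.op k)) j)
      (homologyMap (φ.app (Opposite.op i)) j)
      (wgen k (k + 1) (by omega) j) (wgen i k hk j)
      honestep (IH hk)
    refine Stmt16Aux.isIso_cokernel_map_of_eq _ _ ?_ ?_ hcomp
    · rw [compA i k hk, homologyMap_comp]
    · rw [compB i k hk, homologyMap_comp]
end
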